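/- arXiv:2109.06019 — 5 statements merged into one kernel-verified Lean document; each statement's English description precedes it below -/
import Mathlib

section
/- The number of cyclic-interval partitions of {1,...,n} is 2^n - n, for n ≥ 1. -/
attribute [local instance] Classical.propDecidable

instance {α : Type*} [Finite α] : Finite (Setoid α) :=
  Finite.of_injective (fun s : Setoid α => s.r)
    (fun a b h => Setoid.ext fun x y => by rw [show a.r = b.r from h])

noncomputable instance {α : Type*} [Finite α] : Fintype (Setoid α) :=
  Fintype.ofFinite _

/-- A set partition of `{0,...,n-1}` (encoded as a `Setoid (Fin n)`) is an *interval
partition* iff each of its blocks consists of consecutive integers. -/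
def IsIntervalSetoid {n : ℕ} (s : Setoid (Fin n)) : Prop :=
  ∀ a b c : Fin n, a ≤ b → b ≤ c → s.r a c → s.r a b

/-- A set partition is *non-crossing* iff there are no `a < b < c < d` with `a, c` in one
block and `b, d` in a different block. -/
def IsNoncrossing {n : ℕ} (s : Setoid (Fin n)) : Prop :=
  ∀ a b c d : Fin n, a < b → b < c → c < d → s.r a c → s.r b d → s.r a b

/-- A subset of `Fin n` is a *cyclic interval* iff it consists of cyclically consecutive
residues mod `n`. -/
def IsCyclicInterval {n : ℕ} (B : Set (Fin n)) : Prop :=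
  ∃ (b : Fin n) (k : ℕ), B = {x | ∃ i ≤ k, x = ((finRotate n) ^ i) b}

/-- A set partition of `Fin n` is a *cyclic-interval partition* iff all of its blocks are
cyclic intervals. -/
def IsCyclicIntervalSetoid {n : ℕ} (s : Setoid (Fin n)) : Prop :=
  ∀ a : Fin n, IsCyclicInterval {x | s.r a x}

/-- The singleton-insertion map `Ψ^n_r` : it inserts a singleton block at position `r`,
shifting the rest of the partition. -/
def insertSingleton {n : ℕ} (r : Fin (n + 1)) (s : Setoid (Fin n)) : Setoid (Fin (n + 1)) where
  r a b := (a = r ∧ b = r) ∨ ∃ i j : Fin n, a = r.succAbove i ∧ b = r.succAbove j ∧ s.r i j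
  iseqv := by
    constructor
    · intro a
      rcases eq_or_ne a r with h | h
      · exact Or.inl ⟨h, h⟩
      · obtain ⟨i, hi⟩ := Fin.exists_succAbove_eq h
        exact Or.inr ⟨i, i, hi.symm, hi.symm, s.refl i⟩
    · rintro a b (⟨h1, h2⟩ | ⟨i, j, h1, h2, h3⟩)
      · exact Or.inl ⟨h2, h1⟩
      · exact Or.inr ⟨j, i, h2, h1, s.symm h3⟩
    · rintro a b c (⟨h1, h2⟩ | ⟨i, j, h1, h2, h3⟩) (⟨g1, g2⟩ | ⟨k, l, g1, g2, g3⟩)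
      · exact Or.inl ⟨h1, g2⟩
      · exact absurd (g1.symm.trans h2) (Fin.succAbove_ne r k)
      · exact absurd (h2.symm.trans g1) (Fin.succAbove_ne r j)
      · have hjk : j = k := Fin.succAbove_right_injective (h2.symm.trans g1)
        exact Or.inr ⟨i, l, h1, g2, s.trans h3 (hjk ▸ g3)⟩

/-- The elements of `Fin n` that do NOT form singleton blocks of `s`. -/
noncomputable def nonSingletons {n : ℕ} (s : Setoid (Fin n)) : Finset (Fin n) :=
  Finset.univ.filter fun x => ∃ y, y ≠ x ∧ s.r x y

/-- `RS s` removes all singleton blocks of the partition `s` and relabels the remaining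
elements in an order-preserving way. -/
noncomputable def RS {n : ℕ} (s : Setoid (Fin n)) : Setoid (Fin (nonSingletons s).card) where
  r i j := s.r ((nonSingletons s).orderIsoOfFin rfl i).1 ((nonSingletons s).orderIsoOfFin rfl j).1
  iseqv := ⟨fun i => s.refl _, fun h => s.symm h, fun h h' => s.trans h h'⟩

/-- An *almost-interval* partition: non-crossing, and removing the singleton blocks yields
an interval partition. -/
def IsAlmostInterval {n : ℕ} (s : Setoid (Fin n)) : Prop :=
  IsNoncrossing s ∧ IsIntervalSetoid (RS s)

/-- A *cyclic almost-interval* partition: non-crossing, and removing the singleton blocks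
yields a cyclic-interval partition. -/
def IsAlmostCyclicInterval {n : ℕ} (s : Setoid (Fin n)) : Prop :=
  IsNoncrossing s ∧ IsCyclicIntervalSetoid (RS s)

/-- The number of crossings of a set partition: the number of quadruples `a < b < c < d`
with `a ~ c`, `b ~ d` lying in two different blocks. -/
noncomputable def crossNum {n : ℕ} (s : Setoid (Fin n)) : ℕ :=
  Finset.card (Finset.univ.filter fun p : Fin n × Fin n × Fin n × Fin n =>
    p.1 < p.2.1 ∧ p.2.1 < p.2.2.1 ∧ p.2.2.1 < p.2.2.2 ∧
      s.r p.1 p.2.2.1 ∧ s.r p.2.1 p.2.2.2 ∧ ¬ s.r p.1 p.2.1)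

/-- `{r}` is a singleton block of the partition `s`. -/
def IsSingletonBlock {n : ℕ} (r : Fin n) (s : Setoid (Fin n)) : Prop :=
  ∀ y, s.r r y → y = r

/-- The partition `{{1,2},{3},...,{n}}` (in `Fin n` indexing: block `{0,1}`, rest singletons). -/
def pairBlockFirst (n : ℕ) : Setoid (Fin n) where
  r x y := x = y ∨ ((x : ℕ) < 2 ∧ (y : ℕ) < 2)
  iseqv := by
    refine ⟨fun x => Or.inl rfl, ?_, ?_⟩
    · rintro x y (rfl | h)
      · exact Or.inl rfl
      · exact Or.inr ⟨h.2, h.1⟩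
    · rintro x y z (rfl | h) h'
      · exact h'
      · rcases h' with rfl | h'
        · exact Or.inr h
        · exact Or.inr ⟨h.1, h'.2⟩

/-- The partition of `Fin n` whose blocks are the singleton `{k}` and its complement. -/
def singletonAt {n : ℕ} (k : Fin n) : Setoid (Fin n) where
  r x y := x = y ∨ (x ≠ k ∧ y ≠ k)
  iseqv := by
    refine ⟨fun x => Or.inl rfl, ?_, ?_⟩
    · rintro x y (rfl | h)
      · exact Or.inl rfl
      · exact Or.inr ⟨h.2, h.1⟩
    · rintro x y z (rfl | h) h'
      · exact h'
      · rcases h' with rfl | h'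
        · exact Or.inr h
        · exact Or.inr ⟨h.1, h'.2⟩

/-- The order embedding `Fin (n - m) → Fin n` that skips the `m` positions `j, ..., j+m-1`. -/
def skipEmb {n : ℕ} (m j : ℕ) (h : j + m ≤ n) (i : Fin (n - m)) : Fin n :=
  ⟨if (i : ℕ) < j then (i : ℕ) else (i : ℕ) + m, by have := i.isLt; split <;> omega⟩


/-! ### Auxiliary development: bijection with cut-sets -/

namespace CIAux

open Fin.NatCast Fin.CommRing

variable {m : ℕ}

lemma rot_pow (i : ℕ) (b : Fin (m+1)) :
    ((finRotate (m+1)) ^ i) b = b + (i : Fin (m+1)) := by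
  induction i generalizing b with
  | zero => simp
  | succ i ih =>
      rw [pow_succ, Equiv.Perm.mul_apply, finRotate_succ_apply, ih (b+1)]
      push_cast; ring

lemma isCyclicInterval_iff {B : Set (Fin (m+1))} :
    IsCyclicInterval B ↔ ∃ (b : Fin (m+1)) (k : ℕ),
      B = {x | ∃ i ≤ k, x = b + (i : Fin (m+1))} := by
  unfold IsCyclicInterval
  simp only [rot_pow]

lemma cast_inj_lt {i j : ℕ} (hi : i < m+1) (hj : j < m+1)
    (h : (i : Fin (m+1)) = (j : Fin (m+1))) : i = j := by
  have := congrArg Fin.val h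
  rwa [Fin.val_cast_of_lt hi, Fin.val_cast_of_lt hj] at this

/-- The set of "cut points" of a partition: `x` such that `x` and `x-1` are separated. -/
noncomputable def cuts (s : Setoid (Fin (m+1))) : Finset (Fin (m+1)) :=
  Finset.univ.filter fun x => ¬ s.r x (x - 1)

lemma mem_cuts {s : Setoid (Fin (m+1))} {x : Fin (m+1)} :
    x ∈ cuts s ↔ ¬ s.r x (x - 1) := by simp [cuts]

lemma exStart {A : Finset (Fin (m+1))} (hA : A.Nonempty) (x : Fin (m+1)) :
    ∃ i : ℕ, x - (i : Fin (m+1)) ∈ A := by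
  obtain ⟨a, ha⟩ := hA
  exact ⟨(x - a).val, by rwa [Fin.cast_val_eq_self, sub_sub_cancel]⟩

/-- distance back to the nearest cut point. -/
noncomputable def fd {A : Finset (Fin (m+1))} (hA : A.Nonempty) (x : Fin (m+1)) : ℕ :=
  Nat.find (exStart hA x)

/-- the nearest cut point weakly before `x`. -/
noncomputable def startOf {A : Finset (Fin (m+1))} (hA : A.Nonempty) (x : Fin (m+1)) :
    Fin (m+1) := x - (fd hA x : Fin (m+1))

lemma start_mem {A : Finset (Fin (m+1))} (hA : A.Nonempty) (x : Fin (m+1)) :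
    startOf hA x ∈ A := Nat.find_spec (exStart hA x)

lemma fd_min {A : Finset (Fin (m+1))} (hA : A.Nonempty) (x : Fin (m+1)) {l : ℕ}
    (hl : l < fd hA x) : x - (l : Fin (m+1)) ∉ A := Nat.find_min (exStart hA x) hl

lemma fd_le {A : Finset (Fin (m+1))} (hA : A.Nonempty) (x : Fin (m+1)) {i : ℕ}
    (h : x - (i : Fin (m+1)) ∈ A) : fd hA x ≤ i := Nat.find_le h

lemma fd_lt (A : Finset (Fin (m+1))) (hA : A.Nonempty) (x : Fin (m+1)) :
    fd hA x < m + 1 := by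
  have ha := hA.choose_spec
  have : fd hA x ≤ (x - hA.choose).val :=
    fd_le hA x (by rwa [Fin.cast_val_eq_self, sub_sub_cancel])
  exact lt_of_le_of_lt this (x - hA.choose).isLt

lemma fd_eq {A : Finset (Fin (m+1))} (hA : A.Nonempty) (x : Fin (m+1)) {i : ℕ}
    (hsp : x - (i : Fin (m+1)) ∈ A)
    (hmin : ∀ l < i, x - (l : Fin (m+1)) ∉ A) : fd hA x = i :=
  (Nat.find_eq_iff _).mpr ⟨hsp, fun l hl => hmin l hl⟩

/-- The partition determined by a set of cut points. -/
noncomputable def ofCuts (A : Finset (Fin (m+1))) : Setoid (Fin (m+1)) where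
  r x y := ∀ hA : A.Nonempty, startOf hA x = startOf hA y
  iseqv := ⟨fun _ _ => rfl, fun h hA => (h hA).symm, fun h h' hA => (h hA).trans (h' hA)⟩

lemma ofCuts_r {A : Finset (Fin (m+1))} {x y : Fin (m+1)} :
    (ofCuts A).r x y ↔ ∀ hA : A.Nonempty, startOf hA x = startOf hA y := Iff.rfl

/-- If `b` is a cut point and `b+1,...,b+M` are not, then points on this arc have start `b`. -/
lemma start_of_arc {A : Finset (Fin (m+1))} (hA : A.Nonempty) {b : Fin (m+1)} (hb : b ∈ A)
    {M : ℕ} (hgap : ∀ t : ℕ, 1 ≤ t → t ≤ M → b + (t : Fin (m+1)) ∉ A)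
    {i : ℕ} (hi : i ≤ M) (hiN : i < m + 1) :
    startOf hA (b + (i : Fin (m+1))) = b := by
  have hfd : fd hA (b + (i : Fin (m+1))) = i := by
    refine fd_eq hA _ (by simpa using hb) ?_
    intro l hl
    have hcast : b + (i : Fin (m+1)) - (l : Fin (m+1)) = b + ((i - l : ℕ) : Fin (m+1)) := by
      rw [Nat.cast_sub (le_of_lt hl)]; ring
    rw [hcast]
    exact hgap (i - l) (by omega) (by omega)
  rw [startOf, hfd, add_sub_cancel_right]

/-- If additionally `b + (M+1)` is a cut point, arcs points are the only ones with start `b`. -/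
lemma val_le_of_start_eq {A : Finset (Fin (m+1))} (hA : A.Nonempty) {b x : Fin (m+1)}
    (hst : startOf hA x = b) {M : ℕ}
    (hnext : b + ((M + 1 : ℕ) : Fin (m+1)) ∈ A) : (x - b).val ≤ M := by
  have hbA : b ∈ A := hst ▸ start_mem hA x
  set i' := (x - b).val with hi'
  have h1 : x - (i' : Fin (m+1)) = b := by rw [Fin.cast_val_eq_self, sub_sub_cancel]
  have hle : fd hA x ≤ i' := fd_le hA x (h1 ▸ hbA)
  have hfd : fd hA x = i' := by
    have h2 : x - (fd hA x : Fin (m+1)) = b := hst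
    have h3 : (fd hA x : Fin (m+1)) = (i' : Fin (m+1)) := by
      have := h2.trans h1.symm
      exact sub_right_injective this
    exact cast_inj_lt (fd_lt A hA x) (x - b).isLt h3
  by_contra hgt
  push_neg at hgt
  have hl : i' - (M + 1) < fd hA x := by omega
  apply fd_min hA x hl
  have hx : x = b + (i' : Fin (m+1)) := by rw [← h1]; ring
  have : x - ((i' - (M+1) : ℕ) : Fin (m+1)) = b + ((M + 1 : ℕ) : Fin (m+1)) := by
    rw [hx, Nat.cast_sub (by omega : M + 1 ≤ i')]
    push_cast; ring
  rw [this]; exact hnext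

lemma two_le_card {A : Finset (Fin (m+1))} (h1 : A.card ≠ 1) (hA : A.Nonempty) :
    2 ≤ A.card := by
  have := Finset.card_pos.mpr hA; omega

/-- the chief structural lemma about `ofCuts` when `A` has at least 2 elements. -/
lemma ofCuts_block {A : Finset (Fin (m+1))} (h1 : A.card ≠ 1) (hA : A.Nonempty)
    (b : Fin (m+1)) (hb : b ∈ A) :
    ∃ M : ℕ, M + 1 < m + 1 ∧ (∀ t : ℕ, 1 ≤ t → t ≤ M → b + (t : Fin (m+1)) ∉ A) ∧
      b + ((M + 1 : ℕ) : Fin (m+1)) ∈ A := by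
  obtain ⟨a', ha'A, ha'b⟩ := Finset.exists_mem_ne (two_le_card h1 hA) b
  have hv : 1 ≤ (a' - b).val := by
    rcases Nat.eq_zero_or_pos (a' - b).val with h | h
    · exact absurd (by
        have : a' - b = 0 := by
          have := Fin.cast_val_eq_self (a' - b)
          rw [h] at this; simpa using this.symm
        exact sub_eq_zero.mp this) ha'b
    · exact h
  have hwit : b + (((a' - b).val - 1 + 1 : ℕ) : Fin (m+1)) ∈ A := by
    rw [show (a' - b).val - 1 + 1 = (a' - b).val from by omega, Fin.cast_val_eq_self]
    simpa using ha'A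
  have hex : ∃ j : ℕ, b + ((j + 1 : ℕ) : Fin (m+1)) ∈ A := ⟨(a' - b).val - 1, hwit⟩
  refine ⟨Nat.find hex, ?_, ?_, Nat.find_spec hex⟩
  · have h2 : Nat.find hex ≤ (a' - b).val - 1 := Nat.find_le hwit
    have := (a' - b).isLt; omega
  · intro t h1t h2t ht
    exact Nat.find_min hex (show t - 1 < Nat.find hex by omega)
      (by rw [show t - 1 + 1 = t from by omega]; exact ht)

lemma ofCuts_CIS {A : Finset (Fin (m+1))} (h1 : A.card ≠ 1) :
    IsCyclicIntervalSetoid (ofCuts A) := by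
  intro a
  rw [isCyclicInterval_iff]
  by_cases hA : A.Nonempty
  · set b := startOf hA a with hbdef
    have hbA : b ∈ A := start_mem hA a
    obtain ⟨M, hMlt, hgap, hnext⟩ := ofCuts_block h1 hA b hbA
    refine ⟨b, M, ?_⟩
    ext x
    simp only [Set.mem_setOf_eq]
    constructor
    · intro hr
      have hsx : startOf hA x = b := (hr hA).symm
      refine ⟨(x - b).val, val_le_of_start_eq hA hsx hnext, ?_⟩
      rw [Fin.cast_val_eq_self]; ring
    · rintro ⟨i, hiM, rfl⟩
      intro hA'
      have h2 : startOf hA' (b + (i : Fin (m+1))) = b :=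
        start_of_arc hA' hbA hgap hiM (by omega)
      rw [h2]
  · refine ⟨a, m, ?_⟩
    ext x
    simp only [Set.mem_setOf_eq]
    constructor
    · intro _
      exact ⟨(x - a).val, Nat.lt_succ_iff.mp (x - a).isLt, by
        rw [Fin.cast_val_eq_self]; ring⟩
    · intro _ hA'
      exact absurd hA' hA


lemma start_eq_of_not_mem {A : Finset (Fin (m+1))} (hA : A.Nonempty) {x : Fin (m+1)}
    (hx : x ∉ A) : startOf hA (x - 1) = startOf hA x := by
  have key : ∀ l : ℕ, (x - 1) - (l : Fin (m+1)) = x - ((l + 1 : ℕ) : Fin (m+1)) := by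
    intro l; push_cast; ring
  have hf1 : 1 ≤ fd hA x := by
    rcases Nat.eq_zero_or_pos (fd hA x) with h0 | h0
    · exfalso
      apply hx
      have := start_mem hA x
      rwa [startOf, h0, Nat.cast_zero, sub_zero] at this
    · exact h0
  have hfd' : fd hA (x - 1) = fd hA x - 1 := by
    refine fd_eq hA _ ?_ ?_
    · rw [key, show fd hA x - 1 + 1 = fd hA x from by omega]
      exact start_mem hA x
    · intro l hl
      rw [key]
      exact fd_min hA x (by omega)
  rw [startOf, startOf, hfd', key, show fd hA x - 1 + 1 = fd hA x from by omega]

lemma start_ne_of_mem {A : Finset (Fin (m+1))} (hA : A.Nonempty) (h2 : 2 ≤ A.card)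
    {x : Fin (m+1)} (hx : x ∈ A) : startOf hA (x - 1) ≠ x := by
  intro heq
  have h0 : ((fd hA (x - 1) + 1 : ℕ) : Fin (m+1)) = 0 := by
    apply sub_eq_self.mp
    calc x - ((fd hA (x - 1) + 1 : ℕ) : Fin (m+1))
        = (x - 1) - ((fd hA (x - 1) : ℕ) : Fin (m+1)) := by push_cast; ring
      _ = x := heq
  have hf'lt : fd hA (x - 1) < m + 1 := fd_lt A hA (x - 1)
  have hf'm : fd hA (x - 1) = m := by
    by_contra hne
    have := congrArg Fin.val h0
    rw [Fin.val_cast_of_lt (by omega)] at this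
    simp at this
  have hsub : A ⊆ {x} := by
    intro y hy
    rw [Finset.mem_singleton]
    by_contra hyx
    have hy' : (x - 1) - ((((x - 1) - y).val : ℕ) : Fin (m+1)) = y := by
      rw [Fin.cast_val_eq_self, sub_sub_cancel]
    have hlm : ((x - 1) - y).val < m + 1 := Fin.isLt _
    have hlne : ((x - 1) - y).val ≠ m := by
      intro hlm'
      apply hyx
      have hy2 : y = (x - 1) - ((m : ℕ) : Fin (m+1)) := by rw [← hy', hlm']
      rw [hy2]
      calc (x - 1) - ((m : ℕ) : Fin (m+1)) = x - ((m + 1 : ℕ) : Fin (m+1)) := by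
            push_cast; ring
        _ = x := by rw [Fin.natCast_self, sub_zero]
    exact fd_min hA (x - 1) (show ((x - 1) - y).val < fd hA (x - 1) by omega)
      (by rw [hy']; exact hy)
  have := Finset.card_le_card hsub
  simp only [Finset.card_singleton] at this
  omega

lemma cuts_ofCuts {A : Finset (Fin (m+1))} (h1 : A.card ≠ 1) : cuts (ofCuts A) = A := by
  ext x
  rw [mem_cuts, ofCuts_r]
  by_cases hA : A.Nonempty
  · constructor
    · intro h
      by_contra hxA
      exact h fun hA' => (start_eq_of_not_mem hA' hxA).symm
    · intro hxA h
      have hx0 : fd hA x = 0 :=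
        fd_eq hA x (by simpa using hxA) (by omega)
      have hsx : startOf hA x = x := by rw [startOf, hx0, Nat.cast_zero, sub_zero]
      exact start_ne_of_mem hA (two_le_card h1 hA) hxA ((h hA).symm.trans hsx)
  · constructor
    · intro h
      exact absurd (fun hA' => absurd hA' hA) h
    · intro hxA _
      exact absurd ⟨x, hxA⟩ hA

lemma rel_sub {s : Setoid (Fin (m+1))} {x : Fin (m+1)} (i : ℕ)
    (h : ∀ l : ℕ, l < i → s.r (x - (l : Fin (m+1))) (x - (l : Fin (m+1)) - 1)) :
    s.r x (x - (i : Fin (m+1))) := by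
  induction i with
  | zero => simpa using s.refl x
  | succ i ih =>
      have h1 : s.r x (x - (i : Fin (m+1))) := ih fun l hl => h l (by omega)
      have h2 := h i (by omega)
      have h3 : x - (i : Fin (m+1)) - 1 = x - ((i + 1 : ℕ) : Fin (m+1)) := by push_cast; ring
      exact s.trans h1 (h3 ▸ h2)

lemma cuts_card_ne_one (s : Setoid (Fin (m+1))) : (cuts s).card ≠ 1 := by
  intro h
  obtain ⟨a, ha⟩ := Finset.card_eq_one.mp h
  have hstep : ∀ y : Fin (m+1), y ≠ a → s.r y (y - 1) := by
    intro y hy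
    by_contra hc
    have : y ∈ cuts s := mem_cuts.mpr hc
    rw [ha, Finset.mem_singleton] at this
    exact hy this
  have hchain : s.r (a - 1) ((a - 1) - ((m : ℕ) : Fin (m+1))) := by
    refine rel_sub m ?_
    intro l hl
    refine hstep _ ?_
    intro heq
    have h2 : a - ((l + 1 : ℕ) : Fin (m+1)) = a := by
      calc a - ((l + 1 : ℕ) : Fin (m+1)) = a - 1 - (l : Fin (m+1)) := by push_cast; ring
        _ = a := heq
    have h3 := sub_eq_self.mp h2
    have := congrArg Fin.val h3
    rw [Fin.val_cast_of_lt (by omega)] at this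
    simp at this
  have hend : (a - 1) - ((m : ℕ) : Fin (m+1)) = a := by
    calc (a - 1) - ((m : ℕ) : Fin (m+1)) = a - ((m + 1 : ℕ) : Fin (m+1)) := by push_cast; ring
      _ = a := by rw [Fin.natCast_self, sub_zero]
  rw [hend] at hchain
  have hrel : s.r a (a - 1) := s.symm hchain
  have : a ∈ cuts s := ha ▸ Finset.mem_singleton_self a
  exact mem_cuts.mp this hrel

lemma ofCuts_cuts {s : Setoid (Fin (m+1))} (hs : IsCyclicIntervalSetoid s) :
    ofCuts (cuts s) = s := by
  apply Setoid.ext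
  intro x y
  rw [ofCuts_r]
  have hnc : ∀ z : Fin (m+1), z ∉ cuts s → s.r z (z - 1) := by
    intro z hz
    by_contra hc
    exact hz (mem_cuts.mpr hc)
  by_cases hA : (cuts s).Nonempty
  · constructor
    · intro hr
      have hx : s.r x (startOf hA x) :=
        rel_sub (fd hA x) fun l hl => hnc _ (fd_min hA x hl)
      have hy : s.r y (startOf hA y) :=
        rel_sub (fd hA y) fun l hl => hnc _ (fd_min hA y hl)
      exact s.trans hx (s.symm ((hr hA) ▸ hy))
    · intro hxy hA'
      obtain ⟨b, k, hB⟩ := isCyclicInterval_iff.mp (hs x)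
      have hBm : ∀ z : Fin (m+1), s.r x z ↔ ∃ i ≤ k, z = b + (i : Fin (m+1)) := by
        intro z
        have := Set.ext_iff.mp hB z
        simpa using this
      have hk : k < m := by
        by_contra hk'
        push_neg at hk'
        have huniv : ∀ z, s.r x z := by
          intro z
          rw [hBm]
          refine ⟨(z - b).val, le_trans (Nat.lt_succ_iff.mp (z - b).isLt) hk', ?_⟩
          rw [Fin.cast_val_eq_self]; ring
        obtain ⟨w, hw⟩ := hA
        exact mem_cuts.mp hw (s.trans (s.symm (huniv w)) (huniv (w - 1)))
      have hxb : s.r x b := (hBm b).mpr ⟨0, Nat.zero_le k, by simp⟩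
      have hbm1 : ¬ s.r x (b - 1) := by
        intro hc
        obtain ⟨i, hik, hbi⟩ := (hBm (b - 1)).mp hc
        have hcast : (i : Fin (m+1)) = -1 := by
          calc (i : Fin (m+1)) = (b + (i : Fin (m+1))) - b := by ring
            _ = (b - 1) - b := by rw [← hbi]
            _ = -1 := by ring
        have h0 : ((i + 1 : ℕ) : Fin (m+1)) = 0 := by push_cast; rw [hcast]; ring
        have := congrArg Fin.val h0
        rw [Fin.val_cast_of_lt (by omega)] at this
        simp at this
      have hbA : b ∈ cuts s := mem_cuts.mpr fun hc => hbm1 (s.trans hxb hc)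
      have hgap : ∀ t : ℕ, 1 ≤ t → t ≤ k → b + (t : Fin (m+1)) ∉ cuts s := by
        intro t h1t h2t htA
        have h3 : s.r x (b + (t : Fin (m+1))) := (hBm _).mpr ⟨t, h2t, rfl⟩
        have h4 : s.r x (b + ((t - 1 : ℕ) : Fin (m+1))) := (hBm _).mpr ⟨t - 1, by omega, rfl⟩
        have h5 : b + (t : Fin (m+1)) - 1 = b + ((t - 1 : ℕ) : Fin (m+1)) := by
          rw [Nat.cast_sub h1t]; push_cast; ring
        exact mem_cuts.mp htA (h5 ▸ s.trans (s.symm h3) h4)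
      obtain ⟨i, hik, hxi⟩ := (hBm x).mp (s.refl x)
      obtain ⟨j, hjk, hyj⟩ := (hBm y).mp hxy
      rw [hxi, hyj, start_of_arc hA' hbA hgap hik (by omega),
        start_of_arc hA' hbA hgap hjk (by omega)]
  · -- cuts s = ∅ : everything related
    constructor
    · intro _
      have := rel_sub (s := s) (x := x) ((x - y).val) fun l _ => hnc _ (fun hm => hA ⟨_, hm⟩)
      rwa [Fin.cast_val_eq_self, sub_sub_cancel] at this
    · intro _ hA'
      exact absurd hA' hA

/-- The bijection between cyclic-interval partitions and cut-sets of size `≠ 1`. -/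
noncomputable def theEquiv (m : ℕ) :
    {s : Setoid (Fin (m+1)) // IsCyclicIntervalSetoid s} ≃
      {A : Finset (Fin (m+1)) // A.card ≠ 1} where
  toFun s := ⟨cuts s.1, cuts_card_ne_one s.1⟩
  invFun A := ⟨ofCuts A.1, ofCuts_CIS A.2⟩
  left_inv s := Subtype.ext (ofCuts_cuts s.2)
  right_inv A := Subtype.ext (cuts_ofCuts A.2)

lemma card_aux (m : ℕ) :
    Nat.card {A : Finset (Fin (m+1)) // A.card ≠ 1} = 2 ^ (m+1) - (m+1) := by
  rw [Nat.card_eq_fintype_card, Fintype.card_subtype]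
  have himg : Finset.univ.filter (fun A : Finset (Fin (m+1)) => A.card = 1)
      = Finset.univ.image (fun x : Fin (m+1) => ({x} : Finset (Fin (m+1)))) := by
    ext A
    simp only [Finset.mem_filter, Finset.mem_univ, true_and, Finset.mem_image,
      Finset.card_eq_one]
    exact ⟨fun ⟨a, ha⟩ => ⟨a, ha.symm⟩, fun ⟨a, ha⟩ => ⟨a, ha.symm⟩⟩
  have hc1 : (Finset.univ.filter (fun A : Finset (Fin (m+1)) => A.card = 1)).card = m + 1 := by
    rw [himg, Finset.card_image_of_injective _ Finset.singleton_injective, Finset.card_univ,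
      Fintype.card_fin]
  have hcu : (Finset.univ : Finset (Finset (Fin (m+1)))).card = 2 ^ (m+1) := by
    rw [Finset.card_univ, Fintype.card_finset, Fintype.card_fin]
  have hnot : (Finset.univ.filter (fun A : Finset (Fin (m+1)) => A.card ≠ 1))
      = Finset.univ \ Finset.univ.filter (fun A : Finset (Fin (m+1)) => A.card = 1) := by
    rw [← Finset.filter_not]
  rw [hnot, Finset.card_sdiff_of_subset (Finset.filter_subset _ _), hc1, hcu]

end CIAux

theorem card_cyclicIntervalPartitions (n : ℕ) (hn : 1 ≤ n) :
    Nat.card {s : Setoid (Fin n) // IsCyclicIntervalSetoid s} = 2 ^ n - n := by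
  obtain ⟨m, rfl⟩ : ∃ m, n = m + 1 := ⟨n - 1, by omega⟩
  rw [Nat.card_congr (CIAux.theEquiv m), CIAux.card_aux m]
end

section
/- The Möbius function of the lattice of cyclic-interval partitions of {1,...,n}, evaluated on the full interval [0_n, 1_n], equals (-1)^{n+1}(n-1). -/
attribute [local instance] Classical.propDecidable

open Finset
open scoped Fin.NatCast Fin.CommRing

section Aux
variable {n : ℕ} [NeZero n]

lemma finRotate_pow_apply (i : ℕ) (x : Fin n) :
    ((finRotate n) ^ i) x = x + (i : Fin n) := by
  induction i with
  | zero => simp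
  | succ k ih =>
    obtain ⟨m, rfl⟩ : ∃ m, n = m + 1 := ⟨n - 1, (Nat.succ_pred_eq_of_pos (NeZero.pos n)).symm⟩
    rw [pow_succ', Equiv.Perm.mul_apply, ih, finRotate_succ_apply]
    push_cast
    ring

lemma gapTo_ex (S : Finset (Fin n)) (hS : S.Nonempty) (a : Fin n) :
    ∃ m : ℕ, a - (m : Fin n) ∈ S := by
  obtain ⟨b, hb⟩ := hS
  exact ⟨(a - b).val, by rw [Fin.cast_val_eq_self, sub_sub_cancel]; exact hb⟩

noncomputable def gapTo (S : Finset (Fin n)) (hS : S.Nonempty) (a : Fin n) : ℕ :=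
  Nat.find (gapTo_ex S hS a)

noncomputable def startOf (S : Finset (Fin n)) (hS : S.Nonempty) (a : Fin n) : Fin n :=
  a - ((gapTo S hS a : ℕ) : Fin n)

lemma startOf_mem (S : Finset (Fin n)) (hS : S.Nonempty) (a : Fin n) :
    startOf S hS a ∈ S := Nat.find_spec (gapTo_ex S hS a)

lemma gapTo_min (S : Finset (Fin n)) (hS : S.Nonempty) (a : Fin n) {m : ℕ}
    (h : m < gapTo S hS a) : a - (m : Fin n) ∉ S := Nat.find_min _ h

lemma gapTo_of_mem (S : Finset (Fin n)) (hS : S.Nonempty) {a : Fin n} (h : a ∈ S) :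
    gapTo S hS a = 0 := by
  rw [gapTo, Nat.find_eq_zero]
  simpa using h

lemma startOf_of_mem (S : Finset (Fin n)) (hS : S.Nonempty) {a : Fin n} (h : a ∈ S) :
    startOf S hS a = a := by
  rw [startOf, gapTo_of_mem S hS h]; simp

lemma gapTo_shift (S : Finset (Fin n)) (hS : S.Nonempty) (a : Fin n) (g : ℕ)
    (h : ∀ m < g, a - (m : Fin n) ∉ S) :
    gapTo S hS a = g + gapTo S hS (a - (g : Fin n)) := by
  have cast_eq : ∀ m : ℕ, a - ((g + m : ℕ) : Fin n) = (a - (g : Fin n)) - (m : Fin n) := by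
    intro m; push_cast; ring
  apply le_antisymm
  · apply Nat.find_le
    rw [cast_eq]
    exact Nat.find_spec (gapTo_ex S hS (a - (g : Fin n)))
  · unfold gapTo
    rw [Nat.le_find_iff]
    intro m hm
    by_cases hmg : m < g
    · exact h m hmg
    · push_neg at hmg
      obtain ⟨m', rfl⟩ : ∃ m', m = g + m' := ⟨m - g, by omega⟩
      rw [cast_eq]
      exact Nat.find_min (gapTo_ex S hS (a - (g : Fin n))) (by omega)

lemma startOf_shift (S : Finset (Fin n)) (hS : S.Nonempty) (a : Fin n) (g : ℕ)
    (h : ∀ m < g, a - (m : Fin n) ∉ S) :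
    startOf S hS a = startOf S hS (a - (g : Fin n)) := by
  rw [startOf, startOf, gapTo_shift S hS a g h]
  push_cast
  ring

lemma startOf_startOf (S : Finset (Fin n)) (T : Finset (Fin n)) (hS : S.Nonempty)
    (hT : T.Nonempty) (hsub : T ⊆ S) (a : Fin n) :
    startOf T hT a = startOf T hT (startOf S hS a) := by
  exact startOf_shift T hT a (gapTo S hS a)
    (fun m hm hmem => gapTo_min S hS a hm (hsub hmem))


lemma natCast_inj_of_lt {i j : ℕ} (hi : i < n) (hj : j < n) (h : (i : Fin n) = (j : Fin n)) :
    i = j := by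
  have := congrArg Fin.val h
  rwa [Fin.val_cast_of_lt hi, Fin.val_cast_of_lt hj] at this

lemma natCast_sub_one_eq_neg_one (hn : 1 ≤ n) : ((n - 1 : ℕ) : Fin n) = -1 := by
  have h0 : ((n : ℕ) : Fin n) = 0 := Fin.natCast_self n
  rw [Nat.cast_sub hn, h0, Nat.cast_one, zero_sub]

lemma fgap_ex (S : Finset (Fin n)) {b : Fin n} (hb : b ∈ S) :
    ∃ m : ℕ, b + ((m + 1 : ℕ) : Fin n) ∈ S := by
  refine ⟨n - 1, ?_⟩
  have : ((n - 1 + 1 : ℕ) : Fin n) = 0 := by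
    rw [Nat.sub_add_cancel (NeZero.pos n)]; exact Fin.natCast_self n
  rw [this, add_zero]; exact hb

noncomputable def fgap (S : Finset (Fin n)) {b : Fin n} (hb : b ∈ S) : ℕ :=
  Nat.find (fgap_ex S hb)

lemma fgap_min (S : Finset (Fin n)) {b : Fin n} (hb : b ∈ S) {i : ℕ} (h1 : 1 ≤ i)
    (h2 : i ≤ fgap S hb) : b + (i : Fin n) ∉ S := by
  have : i = (i - 1) + 1 := by omega
  rw [this]
  have hlt : i - 1 < fgap S hb := by omega
  exact Nat.find_min (fgap_ex S hb) hlt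

lemma startOf_block (S : Finset (Fin n)) (hS : S.Nonempty) {b : Fin n} (hb : b ∈ S)
    {i : ℕ} (hi : i ≤ fgap S hb) : startOf S hS (b + (i : Fin n)) = b := by
  have hsh : startOf S hS (b + (i : Fin n)) = startOf S hS (b + (i : Fin n) - (i : Fin n)) := by
    apply startOf_shift
    intro m hm
    have hcast : b + (i : Fin n) - (m : Fin n) = b + ((i - m : ℕ) : Fin n) := by
      rw [Nat.cast_sub (le_of_lt hm)]; ring
    rw [hcast]
    exact fgap_min S hb (by omega) (by omega)
  rw [hsh, add_sub_cancel_right, startOf_of_mem S hS hb]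

lemma block_eq (S : Finset (Fin n)) (hS : S.Nonempty) {b : Fin n} (hb : b ∈ S) :
    {x : Fin n | startOf S hS x = b} = {x | ∃ i ≤ fgap S hb, x = b + (i : Fin n)} := by
  ext x
  simp only [Set.mem_setOf_eq]
  constructor
  · intro h
    refine ⟨gapTo S hS x, ?_, ?_⟩
    · by_contra hk
      push_neg at hk
      have h1 : fgap S hb + 1 ≤ gapTo S hS x := hk
      have hmem : b + ((fgap S hb + 1 : ℕ) : Fin n) ∈ S := Nat.find_spec (fgap_ex S hb)
      have hx : x = b + ((gapTo S hS x : ℕ) : Fin n) := by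
        rw [← h, startOf]; ring
      have hrw : x - ((gapTo S hS x - (fgap S hb + 1) : ℕ) : Fin n)
          = b + ((fgap S hb + 1 : ℕ) : Fin n) := by
        rw [Nat.cast_sub h1]; linear_combination hx
      exact gapTo_min S hS x (by omega) (hrw ▸ hmem)
    · rw [← h, startOf]; ring
  · rintro ⟨i, hi, rfl⟩
    exact startOf_block S hS hb hi

noncomputable def setoidOfCuts (S : Finset (Fin n)) (hS : S.Nonempty) : Setoid (Fin n) where
  r a b := startOf S hS a = startOf S hS b
  iseqv := ⟨fun _ => rfl, Eq.symm, Eq.trans⟩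

lemma setoidOfCuts_cyc (S : Finset (Fin n)) (hS : S.Nonempty) :
    IsCyclicIntervalSetoid (setoidOfCuts S hS) := by
  intro a
  refine ⟨startOf S hS a, fgap S (startOf_mem S hS a), ?_⟩
  have hbe := block_eq S hS (startOf_mem S hS a)
  have : {x | (setoidOfCuts S hS).r a x} = {x : Fin n | startOf S hS x = startOf S hS a} := by
    ext x
    exact ⟨fun h => h.symm, fun h => h.symm⟩
  rw [this, hbe]
  ext x
  simp only [Set.mem_setOf_eq, finRotate_pow_apply]

noncomputable def cutsOf (s : Setoid (Fin n)) : Finset (Fin n) :=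
  Finset.univ.filter fun x => ¬ s.r x (x - 1)

lemma mem_cutsOf {s : Setoid (Fin n)} {x : Fin n} : x ∈ cutsOf s ↔ ¬ s.r x (x - 1) := by
  simp [cutsOf]

lemma cuts_setoidOfCuts (S : Finset (Fin n)) (hS : S.Nonempty) (h2 : 2 ≤ S.card) :
    cutsOf (setoidOfCuts S hS) = S := by
  have hn1 : 1 ≤ n := NeZero.pos n
  ext x
  rw [mem_cutsOf]
  constructor
  · intro h
    by_contra hx
    apply h
    show startOf S hS x = startOf S hS (x - 1)
    have := startOf_shift S hS x 1 (by intro m hm; interval_cases m; simpa using hx)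
    rwa [Nat.cast_one] at this
  · intro hx
    show ¬ startOf S hS x = startOf S hS (x - 1)
    rw [startOf_of_mem S hS hx]
    intro heq
    -- heq : x = startOf (x-1), i.e. (x-1) - g = x with g := gapTo (x-1)
    set g := gapTo S hS (x - 1) with hg
    have heq' : (x - 1) - ((g : ℕ) : Fin n) = x := by rw [hg]; exact heq.symm
    have hcast : ((g : ℕ) : Fin n) = ((n - 1 : ℕ) : Fin n) := by
      rw [natCast_sub_one_eq_neg_one hn1]; linear_combination -heq'
    -- there is another element y ∈ S, y ≠ x, giving g < n - 1
    obtain ⟨y, hy, hyx⟩ : ∃ y ∈ S, y ≠ x := by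
      by_contra hcon
      push_neg at hcon
      have : S ⊆ {x} := fun z hz => Finset.mem_singleton.mpr (hcon z hz)
      have := Finset.card_le_card this
      simp at this
      omega
    have hwit : (x - 1) - (((x - 1 - y).val : ℕ) : Fin n) ∈ S := by
      rw [Fin.cast_val_eq_self, sub_sub_cancel]; exact hy
    have hgle : g ≤ (x - 1 - y).val := Nat.find_le hwit
    have hvne : (x - 1 - y).val ≠ n - 1 := by
      intro hv
      apply hyx
      have : x - 1 - y = ((n - 1 : ℕ) : Fin n) := by
        rw [← hv, Fin.cast_val_eq_self]
      rw [natCast_sub_one_eq_neg_one hn1] at this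
      linear_combination -this
    have hvlt : (x - 1 - y).val < n := (x - 1 - y).isLt
    have hglt : g < n - 1 := by omega
    have := natCast_inj_of_lt (by omega) (by omega) hcast
    omega

lemma full_of_cuts_empty {s : Setoid (Fin n)} (h : cutsOf s = ∅) : ∀ a b, s.r a b := by
  have hstep : ∀ x : Fin n, s.r x (x - 1) := by
    intro x
    by_contra hx
    exact Finset.notMem_empty x (h ▸ mem_cutsOf.mpr hx)
  have hiter : ∀ (m : ℕ) (x : Fin n), s.r x (x - (m : Fin n)) := by
    intro m
    induction m with
    | zero => intro x; simpa using s.refl x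
    | succ k ih =>
      intro x
      have h1 := ih x
      have h2 := hstep (x - (k : Fin n))
      have : x - ((k : Fin n)) - 1 = x - (((k + 1 : ℕ)) : Fin n) := by push_cast; ring
      rw [this] at h2
      exact s.trans h1 h2
  intro a b
  have := hiter (a - b).val a
  rwa [Fin.cast_val_eq_self, sub_sub_cancel] at this

lemma recon (hn : 2 ≤ n) {s : Setoid (Fin n)} (hc : IsCyclicIntervalSetoid s)
    (hne : ¬ ∀ a b, s.r a b) :
    ∃ hC : (cutsOf s).Nonempty,
      2 ≤ (cutsOf s).card ∧ s = setoidOfCuts (cutsOf s) hC := by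
  have hC : (cutsOf s).Nonempty := by
    rcases Finset.eq_empty_or_nonempty (cutsOf s) with h | h
    · exact absurd (full_of_cuts_empty h) hne
    · exact h
  set C := cutsOf s with hCdef
  have main : ∀ a : Fin n, ∃ (b : Fin n) (k : ℕ), k ≤ n - 2 ∧ b ∈ C ∧
      (b + ((k + 1 : ℕ) : Fin n) ∈ C) ∧ ∀ x, (s.r a x ↔ startOf C hC x = b) := by
    intro a
    obtain ⟨b, k0, hB0⟩ := hc a
    have hB0' : {x | s.r a x} = {x : Fin n | ∃ i ≤ k0, x = b + (i : Fin n)} := by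
      rw [hB0]; ext x; simp only [Set.mem_setOf_eq, finRotate_pow_apply]
    set k := min k0 (n - 2) with hk
    have hBmem : ∀ i ≤ k0, s.r a (b + (i : Fin n)) := by
      intro i hi
      have : b + (i : Fin n) ∈ {x | s.r a x} := by rw [hB0']; exact ⟨i, hi, rfl⟩
      exact this
    have hk2 : k0 ≤ n - 2 := by
      by_contra hcon
      push_neg at hcon
      apply hne
      have hall : ∀ y, s.r a y := by
        intro y
        have : y = b + (((y - b).val : ℕ) : Fin n) := by
          rw [Fin.cast_val_eq_self]; ring
        rw [this]
        exact hBmem _ (by have := (y - b).isLt; omega)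
      exact fun x y => s.trans (s.symm (hall x)) (hall y)
    have hB : ∀ x, s.r a x ↔ ∃ i ≤ k0, x = b + (i : Fin n) := by
      intro x
      constructor
      · intro h; have : x ∈ {x | s.r a x} := h; rwa [hB0'] at this
      · intro h; have : x ∈ {x : Fin n | ∃ i ≤ k0, x = b + (i : Fin n)} := h
        rwa [← hB0'] at this
    -- b ∈ C
    have hinj : ∀ i j : ℕ, i ≤ n - 1 → j ≤ n - 1 → b + (i : Fin n) = b + (j : Fin n) → i = j := by
      intro i j hi hj h
      have h' : (i : Fin n) = (j : Fin n) := add_left_cancel h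
      exact natCast_inj_of_lt (by omega) (by omega) h'
    have hbC : b ∈ C := by
      rw [hCdef, mem_cutsOf]
      intro hr
      have hab : s.r a b := by
        have := hBmem 0 (Nat.zero_le _); simpa using this
      have : s.r a (b - 1) := s.trans hab hr
      rw [hB] at this
      obtain ⟨i, hi, hieq⟩ := this
      have : b + ((n - 1 : ℕ) : Fin n) = b + (i : Fin n) := by
        rw [natCast_sub_one_eq_neg_one (by omega)]
        rw [← hieq]; ring
      have := hinj (n - 1) i (le_refl _) (by omega) this
      omega
    -- interior points not in C
    have hintC : ∀ i : ℕ, 1 ≤ i → i ≤ k0 → b + (i : Fin n) ∉ C := by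
      intro i h1 h2
      rw [hCdef, mem_cutsOf]
      intro hcon
      apply hcon
      have e1 : s.r a (b + (i : Fin n)) := hBmem i h2
      have e2 : s.r a (b + ((i - 1 : ℕ) : Fin n)) := hBmem _ (by omega)
      have : b + (i : Fin n) - 1 = b + ((i - 1 : ℕ) : Fin n) := by
        rw [Nat.cast_sub h1]; push_cast; ring
      rw [this]
      exact s.trans (s.symm e1) e2
    -- endpoint successor in C
    have hendC : b + ((k0 + 1 : ℕ) : Fin n) ∈ C := by
      rw [hCdef, mem_cutsOf]
      intro hcon
      have e1 : s.r a (b + ((k0 + 1 : ℕ) : Fin n)) := by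
        apply s.trans (hBmem k0 (le_refl _))
        apply s.symm
        have : b + ((k0 + 1 : ℕ) : Fin n) - 1 = b + (k0 : Fin n) := by push_cast; ring
        rw [this] at hcon
        exact hcon
      rw [hB] at e1
      obtain ⟨i, hi, hieq⟩ := e1
      have := hinj (k0 + 1) i (by omega) (by omega) hieq
      omega
    -- startOf of block elements is b
    have hstart : ∀ i : ℕ, i ≤ k0 → startOf C hC (b + (i : Fin n)) = b := by
      intro i hi
      have hsh : startOf C hC (b + (i : Fin n)) = startOf C hC (b + (i : Fin n) - (i : Fin n)) := by
        apply startOf_shift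
        intro m hm
        have : b + (i : Fin n) - (m : Fin n) = b + ((i - m : ℕ) : Fin n) := by
          rw [Nat.cast_sub (le_of_lt hm)]; ring
        rw [this]
        exact hintC _ (by omega) (by omega)
      rw [hsh, add_sub_cancel_right, startOf_of_mem C hC hbC]
    refine ⟨b, k0, hk2, hbC, hendC, ?_⟩
    intro x
    rw [hB]
    constructor
    · rintro ⟨i, hi, rfl⟩; exact hstart i hi
    · intro hx
      set g := gapTo C hC x with hg
      have hxb : x = b + ((g : ℕ) : Fin n) := by
        have : x - ((g : ℕ) : Fin n) = b := hx
        linear_combination this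
      refine ⟨g, ?_, hxb⟩
      by_contra hcon
      push_neg at hcon
      have hglt : k0 + 1 ≤ g := hcon
      have : x - ((g - (k0 + 1) : ℕ) : Fin n) ∈ C := by
        rw [Nat.cast_sub hglt]
        have : x - (((g : ℕ) : Fin n) - ((k0 + 1 : ℕ) : Fin n)) = b + ((k0 + 1 : ℕ) : Fin n) := by
          linear_combination hxb
        rw [this]
        exact hendC
      exact gapTo_min C hC x (by omega) this
  obtain ⟨b0, k0, hk0, hb0, hend0, hiff0⟩ := main (0 : Fin n)
  have hne2 : b0 + ((k0 + 1 : ℕ) : Fin n) ≠ b0 := by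
    intro h
    have h0 : ((k0 + 1 : ℕ) : Fin n) = ((0 : ℕ) : Fin n) := by
      rw [Nat.cast_zero]
      exact add_eq_left.mp h
    have := natCast_inj_of_lt (by omega) (by omega) h0
    omega
  have hcard : 2 ≤ C.card := Finset.one_lt_card.mpr ⟨_, hend0, _, hb0, hne2⟩
  refine ⟨hC, hcard, ?_⟩
  apply Setoid.ext
  intro a x
  obtain ⟨b, k, -, -, -, hiff⟩ := main a
  have ha : startOf C hC a = b := (hiff a).mp (s.refl a)
  show s.r a x ↔ startOf C hC a = startOf C hC x
  rw [hiff x, ha]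
  exact eq_comm

lemma setoidOfCuts_congr {S T : Finset (Fin n)} (h : S = T) (hS : S.Nonempty)
    (hT : T.Nonempty) : setoidOfCuts S hS = setoidOfCuts T hT := by subst h; rfl

lemma cuts_of_full {s : Setoid (Fin n)} (h : ∀ a b, s.r a b) : cutsOf s = ∅ := by
  ext x; simp [mem_cutsOf, h]

def fullSetoid : Setoid (Fin n) :=
  ⟨fun _ _ => True, ⟨fun _ => trivial, fun _ => trivial, fun _ _ => trivial⟩⟩

lemma fullSetoid_cyc : IsCyclicIntervalSetoid (fullSetoid (n := n)) := by
  intro a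
  refine ⟨a, n - 1, ?_⟩
  ext x
  simp only [Set.mem_setOf_eq, finRotate_pow_apply]
  constructor
  · intro _
    exact ⟨(x - a).val, by have := (x - a).isLt; omega,
      by rw [Fin.cast_val_eq_self]; ring⟩
  · intro _; trivial

def eqSetoid : Setoid (Fin n) := ⟨Eq, eq_equivalence⟩

lemma eqSetoid_cyc : IsCyclicIntervalSetoid (eqSetoid (n := n)) := by
  intro a
  refine ⟨a, 0, ?_⟩
  ext x
  simp only [Set.mem_setOf_eq]
  constructor
  · rintro rfl; exact ⟨0, le_refl _, by simp⟩
  · rintro ⟨i, hi, rfl⟩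
    interval_cases i
    simp

lemma cuts_eqSetoid (hn : 2 ≤ n) : cutsOf (eqSetoid (n := n)) = Finset.univ := by
  ext x
  simp only [mem_cutsOf, Finset.mem_univ, iff_true]
  show ¬ x = x - 1
  intro h
  have h1 : ((1 : ℕ) : Fin n) = ((0 : ℕ) : Fin n) := by
    push_cast
    linear_combination h
  have := natCast_inj_of_lt (by omega) (by omega) h1
  omega

lemma cuts_antitone {s t : Setoid (Fin n)} (h : s ≤ t) : cutsOf t ⊆ cutsOf s := by
  intro x hx
  rw [mem_cutsOf] at *
  exact fun hr => hx (Setoid.le_def.mp h hr)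

lemma le_of_cuts_subset (hn : 2 ≤ n) {s t : Setoid (Fin n)} (hcs : IsCyclicIntervalSetoid s)
    (hct : IsCyclicIntervalSetoid t) (hsub : cutsOf t ⊆ cutsOf s) : s ≤ t := by
  by_cases ht : ∀ a b, t.r a b
  · rw [Setoid.le_def]; intro x y _; exact ht x y
  obtain ⟨hCt, hct2, htEq⟩ := recon hn hct ht
  have hs : ¬ ∀ a b, s.r a b := by
    intro hs
    have h0 : cutsOf s = ∅ := cuts_of_full hs
    rw [h0, Finset.subset_empty] at hsub
    exact absurd hsub (Finset.nonempty_iff_ne_empty.mp hCt)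
  obtain ⟨hCs, hcs2, hsEq⟩ := recon hn hcs hs
  rw [Setoid.le_def]
  intro x y hxy
  rw [hsEq] at hxy
  rw [htEq]
  show startOf (cutsOf t) hCt x = startOf (cutsOf t) hCt y
  have hxy' : startOf (cutsOf s) hCs x = startOf (cutsOf s) hCs y := hxy
  rw [startOf_startOf (cutsOf s) (cutsOf t) hCs hCt hsub x,
      startOf_startOf (cutsOf s) (cutsOf t) hCs hCt hsub y, hxy']

lemma negpow_factor {c u : ℕ} (h : u ≤ c) : ((-1 : ℤ)) ^ (c - u) = (-1) ^ c * (-1) ^ u := by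
  have hc : c + u = (c - u) + 2 * u := by omega
  have : ((-1 : ℤ)) ^ (c + u) = (-1) ^ (c - u) := by
    rw [hc, pow_add, pow_mul]
    norm_num
  rw [← this, pow_add]

end Aux


theorem mobius_cyclicIntervalPartitions (n : ℕ) (hn : 2 ≤ n)
    (μ : {s : Setoid (Fin n) // IsCyclicIntervalSetoid s} →
      {s : Setoid (Fin n) // IsCyclicIntervalSetoid s} → ℤ)
    (hμ : ∀ a b, a ≤ b →
      (∑ z ∈ Finset.univ.filter (fun z => a ≤ z ∧ z ≤ b), μ a z) = if a = b then 1 else 0)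
    (bot top : {s : Setoid (Fin n) // IsCyclicIntervalSetoid s})
    (hbot : ∀ x, bot ≤ x) (htop : ∀ x, x ≤ top) :
    μ bot top = (-1) ^ (n + 1) * (n - 1 : ℤ) := by
  haveI : NeZero n := ⟨by omega⟩
  classical
  -- basic facts about bot and top
  have htop_full : ∀ a b, top.1.r a b := by
    intro a b
    have h : (fullSetoid : Setoid (Fin n)) ≤ top.1 :=
      Subtype.coe_le_coe.mpr (htop ⟨fullSetoid, fullSetoid_cyc⟩)
    exact Setoid.le_def.mp h (x := a) (y := b) trivial
  have hbot_eq : bot.1 = eqSetoid := by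
    have h1 : bot.1 ≤ eqSetoid := Subtype.coe_le_coe.mpr (hbot ⟨eqSetoid, eqSetoid_cyc⟩)
    have h2 : (eqSetoid : Setoid (Fin n)) ≤ bot.1 := by
      rw [Setoid.le_def]
      intro x y h
      exact h ▸ bot.1.refl x
    exact le_antisymm h1 h2
  have hcuts_bot : cutsOf bot.1 = Finset.univ := by rw [hbot_eq]; exact cuts_eqSetoid hn
  have hcuts_top : cutsOf top.1 = ∅ := cuts_of_full htop_full
  have hfull_top : ∀ z : {s : Setoid (Fin n) // IsCyclicIntervalSetoid s}, (∀ a b, z.1.r a b) → z = top := by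
    intro z hz
    refine le_antisymm (htop z) ?_
    show top ≤ z
    rw [← Subtype.coe_le_coe, Setoid.le_def]
    intro x y _
    exact hz x y
  have hbot_ne_top : bot ≠ top := by
    intro h
    have h01 : bot.1.r 0 1 := h ▸ htop_full 0 1
    rw [hbot_eq] at h01
    have h01' : ((0 : ℕ) : Fin n) = ((1 : ℕ) : Fin n) := by push_cast; exact h01
    have := natCast_inj_of_lt (by omega) (by omega) h01'
    omega
  have hreconL : ∀ z : {s : Setoid (Fin n) // IsCyclicIntervalSetoid s}, z ≠ top → ∃ hC : (cutsOf z.1).Nonempty,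
      2 ≤ (cutsOf z.1).card ∧ z.1 = setoidOfCuts (cutsOf z.1) hC := by
    intro z hz
    apply recon hn z.2
    intro hfull
    exact hz (hfull_top z hfull)
  have hinjL : ∀ z w : {s : Setoid (Fin n) // IsCyclicIntervalSetoid s}, z ≠ top → w ≠ top → cutsOf z.1 = cutsOf w.1 → z = w := by
    intro z w hz hw hc
    obtain ⟨hCz, -, hzEq⟩ := hreconL z hz
    obtain ⟨hCw, -, hwEq⟩ := hreconL w hw
    exact Subtype.ext (hzEq.trans ((setoidOfCuts_congr hc hCz hCw).trans hwEq.symm))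
  have hleL : ∀ z w : {s : Setoid (Fin n) // IsCyclicIntervalSetoid s}, z ≤ w ↔ cutsOf w.1 ⊆ cutsOf z.1 := by
    intro z w
    constructor
    · intro h; exact cuts_antitone h
    · intro h; exact le_of_cuts_subset hn z.2 w.2 h
  -- the inverse map
  set jL : Finset (Fin n) → {s : Setoid (Fin n) // IsCyclicIntervalSetoid s} := fun T =>
    if h : T.Nonempty then ⟨setoidOfCuts T h, setoidOfCuts_cyc T h⟩ else top with hjL
  have hjL_cuts : ∀ T : Finset (Fin n), 2 ≤ T.card → cutsOf (jL T).1 = T := by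
    intro T hT
    have hTne : T.Nonempty := Finset.card_pos.mp (by omega)
    rw [hjL]
    simp only [dif_pos hTne]
    exact cuts_setoidOfCuts T hTne hT
  have hjL_ne_top : ∀ T : Finset (Fin n), 2 ≤ T.card → jL T ≠ top := by
    intro T hT h
    have := hjL_cuts T hT
    rw [h, hcuts_top] at this
    rw [← this] at hT
    simp at hT
  have hjL_inv : ∀ z : {s : Setoid (Fin n) // IsCyclicIntervalSetoid s}, z ≠ top → jL (cutsOf z.1) = z := by
    intro z hz
    obtain ⟨hCz, h2, hzEq⟩ := hreconL z hz
    rw [hjL]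
    simp only [dif_pos hCz]
    exact Subtype.ext hzEq.symm
  have hcard_le : ∀ T : Finset (Fin n), T.card ≤ n := by
    intro T
    have := Finset.card_le_univ T
    simpa using this
  have hw_ne_top : ∀ w z : {s : Setoid (Fin n) // IsCyclicIntervalSetoid s}, w ≤ z → z ≠ top → w ≠ top := by
    intro w z hwz hz hw
    exact hz (le_antisymm (htop z) (hw ▸ hwz))
  -- the key sum over a lower interval
  have hsum : ∀ z : {s : Setoid (Fin n) // IsCyclicIntervalSetoid s}, z ≠ top →
      (∑ w ∈ Finset.univ.filter (fun w => w ≤ z), ((-1 : ℤ) ^ (n - (cutsOf w.1).card)))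
        = if z = bot then 1 else 0 := by
    intro z hz
    obtain ⟨hCz, hz2, -⟩ := hreconL z hz
    set S := cutsOf z.1 with hS
    have step1 :
        (∑ w ∈ Finset.univ.filter (fun w => w ≤ z), ((-1 : ℤ) ^ (n - (cutsOf w.1).card)))
        = ∑ T ∈ Finset.univ.filter (fun T : Finset (Fin n) => S ⊆ T),
            ((-1 : ℤ) ^ (n - T.card)) := by
      apply Finset.sum_nbij' (i := fun w => cutsOf w.1) (j := jL)
      · intro w hw
        rw [Finset.mem_filter] at hw ⊢
        exact ⟨Finset.mem_univ _, (hleL w z).mp hw.2⟩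
      · intro T hT
        rw [Finset.mem_filter] at hT ⊢
        have h2T : 2 ≤ T.card := le_trans hz2 (Finset.card_le_card hT.2)
        refine ⟨Finset.mem_univ _, ?_⟩
        rw [hleL]
        rw [hjL_cuts T h2T]
        exact hT.2
      · intro w hw
        rw [Finset.mem_filter] at hw
        exact hjL_inv w (hw_ne_top w z hw.2 hz)
      · intro T hT
        rw [Finset.mem_filter] at hT
        exact hjL_cuts T (le_trans hz2 (Finset.card_le_card hT.2))
      · intro w hw
        rfl
    rw [step1]
    have step2 : ∑ T ∈ Finset.univ.filter (fun T : Finset (Fin n) => S ⊆ T),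
            ((-1 : ℤ) ^ (n - T.card))
        = ∑ U ∈ Sᶜ.powerset, ((-1 : ℤ) ^ (Sᶜ.card - U.card)) := by
      apply Finset.sum_nbij' (i := fun T => T \ S) (j := fun U => S ∪ U)
      · intro T hT
        rw [Finset.mem_filter] at hT
        rw [Finset.mem_powerset]
        intro x hx
        rw [Finset.mem_sdiff] at hx
        simpa using hx.2
      · intro U hU
        rw [Finset.mem_filter]
        exact ⟨Finset.mem_univ _, Finset.subset_union_left⟩
      · intro T hT
        rw [Finset.mem_filter] at hT
        exact Finset.union_sdiff_of_subset hT.2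
      · intro U hU
        rw [Finset.mem_powerset] at hU
        apply Finset.union_sdiff_cancel_left
        rw [Finset.disjoint_left]
        intro x hxS hxU
        have := hU hxU
        simp at this
        exact this hxS
      · intro T hT
        rw [Finset.mem_filter] at hT
        congr 1
        have h1 : (T \ S).card + S.card = T.card := Finset.card_sdiff_add_card_eq_card hT.2
        have h2 : Sᶜ.card = n - S.card := by
          rw [Finset.card_compl]
          simp
        have h3 : T.card ≤ n := hcard_le T
        omega
    rw [step2]
    have step3 : ∑ U ∈ Sᶜ.powerset, ((-1 : ℤ) ^ (Sᶜ.card - U.card))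
        = (-1 : ℤ) ^ Sᶜ.card * ∑ U ∈ Sᶜ.powerset, ((-1 : ℤ) ^ U.card) := by
      rw [Finset.mul_sum]
      apply Finset.sum_congr rfl
      intro U hU
      rw [Finset.mem_powerset] at hU
      exact negpow_factor (Finset.card_le_card hU)
    rw [step3, Finset.sum_powerset_neg_one_pow_card]
    by_cases hzb : z = bot
    · have hSu : S = Finset.univ := by rw [hS, hzb, hcuts_bot]
      rw [if_pos hzb, hSu]
      simp
    · have hSu : S ≠ Finset.univ := by
        intro h
        exact hzb (hinjL z bot hz hbot_ne_top (by rw [← hS, h, hcuts_bot]))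
      have hSc : Sᶜ ≠ ∅ := by
        intro h
        rw [Finset.compl_eq_empty_iff] at h
        exact hSu h
      rw [if_neg hzb, if_neg hSc]
      ring
  -- μ agrees with the candidate on non-top elements
  have hfilter_bot : ∀ z, Finset.univ.filter (fun w => bot ≤ w ∧ w ≤ z)
      = Finset.univ.filter (fun w => w ≤ z) := by
    intro z
    apply Finset.filter_congr
    intro w _
    simp [hbot w]
  have hfb : Finset.univ.filter (fun w => w ≤ bot) = {bot} := by
    ext w
    simp only [Finset.mem_filter, Finset.mem_univ, true_and, Finset.mem_singleton]
    exact ⟨fun h => le_antisymm h (hbot w), fun h => le_of_eq h⟩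
  have hbase : μ bot bot = 1 := by
    have h0 := hμ bot bot (le_refl _)
    rw [if_pos rfl, hfilter_bot, hfb, Finset.sum_singleton] at h0
    exact h0
  have hbase' : μ bot bot = (-1 : ℤ) ^ (n - (cutsOf bot.1).card) := by
    rw [hbase, hcuts_bot]
    simp
  have key : ∀ k : ℕ, ∀ z, z ≠ top → n - (cutsOf z.1).card ≤ k →
      μ bot z = (-1 : ℤ) ^ (n - (cutsOf z.1).card) := by
    intro k
    induction k with
    | zero =>
      intro z hz hle
      have hcz : (cutsOf z.1).card = n := by
        have h2 := hcard_le (cutsOf z.1)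
        omega
      have hzb : z = bot := by
        apply hinjL z bot hz hbot_ne_top
        rw [hcuts_bot]
        apply Finset.eq_univ_of_card
        simpa using hcz
      rw [hzb]
      exact hbase'
    | succ k ih =>
      intro z hz hle
      by_cases hzb : z = bot
      · rw [hzb]
        exact hbase'
      · have h0 := hμ bot z (hbot z)
        rw [hfilter_bot, if_neg (fun h => hzb h.symm)] at h0
        have hz_mem : z ∈ Finset.univ.filter (fun w => w ≤ z) := by
          simp [le_refl]
        have hsplitμ := Finset.add_sum_erase _ (μ bot) hz_mem
        have hih : ∀ w ∈ (Finset.univ.filter (fun w => w ≤ z)).erase z,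
            μ bot w = (-1 : ℤ) ^ (n - (cutsOf w.1).card) := by
          intro w hw
          rw [Finset.mem_erase, Finset.mem_filter] at hw
          obtain ⟨hwne, -, hwle⟩ := hw
          have hwt : w ≠ top := hw_ne_top w z hwle hz
          have hssub : cutsOf z.1 ⊂ cutsOf w.1 := by
            rw [Finset.ssubset_iff_subset_ne]
            exact ⟨(hleL w z).mp hwle, fun h => hwne (hinjL w z hwt hz h.symm)⟩
          have hcards : (cutsOf z.1).card < (cutsOf w.1).card := Finset.card_lt_card hssub
          have := hcard_le (cutsOf w.1)
          exact ih w hwt (by omega)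
        have hsplitν := Finset.add_sum_erase _
          (fun w => (-1 : ℤ) ^ (n - (cutsOf w.1).card)) hz_mem
        have hνsum := hsum z hz
        rw [if_neg hzb] at hνsum
        rw [Finset.sum_congr rfl hih] at hsplitμ
        rw [h0] at hsplitμ
        rw [hνsum] at hsplitν
        linarith [hsplitμ, hsplitν]
  -- final computation
  have hfinal := hμ bot top (hbot top)
  rw [if_neg hbot_ne_top] at hfinal
  have hfe : Finset.univ.filter (fun w => bot ≤ w ∧ w ≤ top) = Finset.univ := by
    apply Finset.filter_true_of_mem
    intro w _
    exact ⟨hbot w, htop w⟩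
  rw [hfe] at hfinal
  have hsplit_top := Finset.add_sum_erase _ (μ bot) (Finset.mem_univ top)
  have herase : ∀ w ∈ Finset.univ.erase top, μ bot w = (-1 : ℤ) ^ (n - (cutsOf w.1).card) := by
    intro w hw
    rw [Finset.mem_erase] at hw
    exact key n w hw.1 (by omega)
  rw [Finset.sum_congr rfl herase, hfinal] at hsplit_top
  -- reindex the erase-top sum by cut sets
  have hbij : ∑ w ∈ Finset.univ.erase top, ((-1 : ℤ) ^ (n - (cutsOf w.1).card))
      = ∑ T ∈ Finset.univ.filter (fun T : Finset (Fin n) => 2 ≤ T.card),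
          ((-1 : ℤ) ^ (n - T.card)) := by
    apply Finset.sum_nbij' (i := fun w => cutsOf w.1) (j := jL)
    · intro w hw
      rw [Finset.mem_erase] at hw
      obtain ⟨-, h2, -⟩ := hreconL w hw.1
      rw [Finset.mem_filter]
      exact ⟨Finset.mem_univ _, h2⟩
    · intro T hT
      rw [Finset.mem_filter] at hT
      rw [Finset.mem_erase]
      exact ⟨hjL_ne_top T hT.2, Finset.mem_univ _⟩
    · intro w hw
      rw [Finset.mem_erase] at hw
      exact hjL_inv w hw.1
    · intro T hT
      rw [Finset.mem_filter] at hT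
      exact hjL_cuts T hT.2
    · intro w hw
      rfl
  rw [hbij] at hsplit_top
  -- evaluate the sum over all T with 2 ≤ |T|
  have huniv_sum : ∑ T ∈ (Finset.univ : Finset (Finset (Fin n))), ((-1 : ℤ) ^ (n - T.card))
      = 0 := by
    have h1 : ∀ T ∈ (Finset.univ : Finset (Finset (Fin n))),
        ((-1 : ℤ) ^ (n - T.card)) = (-1 : ℤ) ^ n * (-1 : ℤ) ^ T.card := by
      intro T _
      exact negpow_factor (hcard_le T)
    rw [Finset.sum_congr rfl h1, ← Finset.mul_sum]
    have h4 : ∑ T ∈ (Finset.univ : Finset (Finset (Fin n))), ((-1 : ℤ) ^ T.card) = 0 := by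
      rw [← Finset.powerset_univ, Finset.sum_powerset_neg_one_pow_card]
      rw [if_neg]
      exact Finset.nonempty_iff_ne_empty.mp Finset.univ_nonempty
    rw [h4, mul_zero]
  have hsplit_card := Finset.sum_filter_add_sum_filter_not
    (Finset.univ : Finset (Finset (Fin n))) (fun T => 2 ≤ T.card)
    (fun T => ((-1 : ℤ) ^ (n - T.card)))
  rw [huniv_sum] at hsplit_card
  have hsmall : Finset.univ.filter (fun T : Finset (Fin n) => ¬ 2 ≤ T.card)
      = insert ∅ (Finset.univ.filter fun T : Finset (Fin n) => T.card = 1) := by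
    ext T
    simp only [Finset.mem_filter, Finset.mem_univ, true_and, Finset.mem_insert]
    constructor
    · intro h
      have h01 : T.card = 0 ∨ T.card = 1 := by omega
      rcases h01 with h0 | h1
      · left; exact Finset.card_eq_zero.mp h0
      · right; exact h1
    · rintro (rfl | h)
      · simp
      · omega
  have hempty_notmem : (∅ : Finset (Fin n)) ∉
      (Finset.univ.filter fun T : Finset (Fin n) => T.card = 1) := by
    simp
  have hone_sum : ∑ T ∈ (Finset.univ.filter fun T : Finset (Fin n) => T.card = 1),
      ((-1 : ℤ) ^ (n - T.card)) = (n : ℤ) * (-1 : ℤ) ^ (n - 1) := by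
    have hcong : ∀ T ∈ (Finset.univ.filter fun T : Finset (Fin n) => T.card = 1),
        ((-1 : ℤ) ^ (n - T.card)) = (-1 : ℤ) ^ (n - 1) := by
      intro T hT
      rw [Finset.mem_filter] at hT
      rw [hT.2]
    rw [Finset.sum_congr rfl hcong, Finset.sum_const, nsmul_eq_mul]
    congr 1
    have : (Finset.univ.filter fun T : Finset (Fin n) => T.card = 1)
        = Finset.univ.powersetCard 1 := by
      rw [Finset.powersetCard_eq_filter, Finset.powerset_univ]
    rw [this, Finset.card_powersetCard]
    simp
  have hsmall_sum : ∑ T ∈ Finset.univ.filter (fun T : Finset (Fin n) => ¬ 2 ≤ T.card),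
      ((-1 : ℤ) ^ (n - T.card)) = (-1 : ℤ) ^ n + (n : ℤ) * (-1 : ℤ) ^ (n - 1) := by
    rw [hsmall, Finset.sum_insert hempty_notmem, hone_sum]
    simp
  rw [hsmall_sum] at hsplit_card
  -- put it together
  have hμtop : μ bot top = (-1 : ℤ) ^ n + (n : ℤ) * (-1 : ℤ) ^ (n - 1) := by
    linarith [hsplit_top, hsplit_card]
  rw [hμtop]
  obtain ⟨m, rfl⟩ : ∃ m, n = m + 2 := ⟨n - 2, by omega⟩
  have e1 : m + 2 - 1 = m + 1 := by omega
  rw [e1]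
  push_cast
  ring
end

section
/- The number of almost-interval partitions of {1,...,n} equals the odd-indexed Fibonacci number F_{2n-1}, where F_1 = F_2 = 1. In particular the counts are 1, 2, 5, 13, 34, 89, ... for n = 1, 2, 3, 4, 5, 6. -/
attribute [local instance] Classical.propDecidable

-- ===== auxiliary development =====


/-- word validity: nonzero subword matches (1 2 2*)* -/
def ValidW {n : ℕ} (w : Fin n → Fin 3) : Prop :=
  (∀ b, w b = 1 → ∃ c, b < c ∧ w c = 2 ∧ ∀ d, b < d → d < c → w d = 0) ∧
  (∀ b, w b = 2 → ∃ a, a < b ∧ w a ≠ 0)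

/-- pending words: nonzero subword matches (1 2 2*)* 1 -/
def PendingW {n : ℕ} (w : Fin n → Fin 3) : Prop :=
  (∃ b, w b = 1 ∧ ∀ c, b < c → w c = 0) ∧
  (∀ b, w b = 1 → (∀ c, b < c → w c = 0) ∨
      ∃ c, b < c ∧ w c = 2 ∧ ∀ d, b < d → d < c → w d = 0) ∧
  (∀ b, w b = 2 → ∃ a, a < b ∧ w a ≠ 0)

lemma validW_zero {n : ℕ} : ValidW (fun _ : Fin n => (0 : Fin 3)) := by
  constructor
  · intro b hb; simp at hb
  · intro b hb; simp at hb

lemma validW_eq_zero {n : ℕ} {w : Fin n → Fin 3} (h : ¬ ∃ b, w b ≠ 0) :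
    w = fun _ => 0 := by
  funext b; push_neg at h; exact h b

lemma pendingW_not_validW {n : ℕ} {w : Fin n → Fin 3} (hp : PendingW w) : ¬ ValidW w := by
  rintro ⟨h1, _⟩
  obtain ⟨b, hb1, hb2⟩ := hp.1
  obtain ⟨c, hbc, hc2, _⟩ := h1 b hb1
  rw [hb2 c hbc] at hc2
  exact absurd hc2 (by decide)

section Snoc
variable {n : ℕ} (w : Fin n → Fin 3)

lemma aux_lt_castSucc {b : Fin (n+1)} {i : Fin n} (h : b < Fin.castSucc i) :
    ∃ j : Fin n, b = Fin.castSucc j ∧ j < i := by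
  have hb : b ≠ Fin.last n := by
    intro hb; rw [hb] at h; exact absurd h (Fin.castSucc_lt_last i).asymm
  obtain ⟨j, rfl⟩ := Fin.exists_castSucc_eq.2 hb
  exact ⟨j, rfl, by simpa using h⟩

lemma snoc_valid_zero : ValidW (Fin.snoc w 0) ↔ ValidW w := by
  constructor
  · rintro ⟨h1, h2⟩
    constructor
    · intro b hb
      obtain ⟨c, hbc, hc, hz⟩ := h1 (Fin.castSucc b) (by simpa using hb)
      have hc' : c ≠ Fin.last n := by
        intro h; rw [h, Fin.snoc_last] at hc; exact absurd hc (by decide)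
      obtain ⟨j, rfl⟩ := Fin.exists_castSucc_eq.2 hc'
      refine ⟨j, by simpa using hbc, by simpa using hc, fun d hd1 hd2 => ?_⟩
      have := hz (Fin.castSucc d) (by simpa using hd1) (by simpa using hd2)
      simpa using this
    · intro b hb
      obtain ⟨a, hab, ha⟩ := h2 (Fin.castSucc b) (by simpa using hb)
      obtain ⟨j, rfl, hj⟩ := aux_lt_castSucc hab
      exact ⟨j, hj, by simpa using ha⟩
  · rintro ⟨h1, h2⟩
    constructor
    · intro b hb
      rcases Fin.eq_castSucc_or_eq_last b with ⟨i, rfl⟩ | rfl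
      · obtain ⟨c, hbc, hc, hz⟩ := h1 i (by simpa using hb)
        refine ⟨Fin.castSucc c, by simpa using hbc, by simpa using hc, fun d hd1 hd2 => ?_⟩
        obtain ⟨j, rfl, hj⟩ := aux_lt_castSucc hd2
        have := hz j (by simpa using hd1) hj
        simpa using this
      · rw [Fin.snoc_last] at hb; exact absurd hb (by decide)
    · intro b hb
      rcases Fin.eq_castSucc_or_eq_last b with ⟨i, rfl⟩ | rfl
      · obtain ⟨a, hab, ha⟩ := h2 i (by simpa using hb)
        exact ⟨Fin.castSucc a, by simpa using hab, by simpa using ha⟩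
      · rw [Fin.snoc_last] at hb; exact absurd hb (by decide)

lemma snoc_valid_one : ¬ ValidW (Fin.snoc w 1) := by
  rintro ⟨h1, _⟩
  obtain ⟨c, hc1, hc2, _⟩ := h1 (Fin.last n) (by simp)
  exact absurd hc1 (by simp [Fin.lt_iff_val_lt_val]; omega)

lemma snoc_pending_two : ¬ PendingW (Fin.snoc w 2) := by
  rintro ⟨⟨b, hb1, hb2⟩, _, _⟩
  have hb' : b ≠ Fin.last n := by
    intro h; rw [h, Fin.snoc_last] at hb1; exact absurd hb1 (by decide)
  obtain ⟨i, rfl⟩ := Fin.exists_castSucc_eq.2 hb'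
  have := hb2 (Fin.last n) (Fin.castSucc_lt_last i)
  rw [Fin.snoc_last] at this
  exact absurd this (by decide)

lemma snoc_pending_zero : PendingW (Fin.snoc w 0) ↔ PendingW w := by
  constructor
  · rintro ⟨⟨b, hb1, hb2⟩, h2, h3⟩
    have hb' : b ≠ Fin.last n := by
      intro h; rw [h, Fin.snoc_last] at hb1; exact absurd hb1 (by decide)
    obtain ⟨i, rfl⟩ := Fin.exists_castSucc_eq.2 hb'
    refine ⟨⟨i, by simpa using hb1, fun c hc => by
        have := hb2 (Fin.castSucc c) (by simpa using hc); simpa using this⟩, ?_, ?_⟩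
    · intro b hb
      rcases h2 (Fin.castSucc b) (by simpa using hb) with h | ⟨c, hc1, hc2, hz⟩
      · left; intro c hc
        have := h (Fin.castSucc c) (by simpa using hc); simpa using this
      · have hc' : c ≠ Fin.last n := by
          intro h; rw [h, Fin.snoc_last] at hc2; exact absurd hc2 (by decide)
        obtain ⟨j, rfl⟩ := Fin.exists_castSucc_eq.2 hc'
        right
        refine ⟨j, by simpa using hc1, by simpa using hc2, fun d hd1 hd2 => ?_⟩
        have := hz (Fin.castSucc d) (by simpa using hd1) (by simpa using hd2)
        simpa using this
    · intro b hb
      obtain ⟨a, hab, ha⟩ := h3 (Fin.castSucc b) (by simpa using hb)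
      obtain ⟨j, rfl, hj⟩ := aux_lt_castSucc hab
      exact ⟨j, hj, by simpa using ha⟩
  · rintro ⟨⟨b, hb1, hb2⟩, h2, h3⟩
    refine ⟨⟨Fin.castSucc b, by simpa using hb1, fun c hc => ?_⟩, ?_, ?_⟩
    · rcases Fin.eq_castSucc_or_eq_last c with ⟨j, rfl⟩ | rfl
      · have := hb2 j (by simpa using hc); simpa using this
      · simp
    · intro c hc
      rcases Fin.eq_castSucc_or_eq_last c with ⟨i, rfl⟩ | rfl
      · rcases h2 i (by simpa using hc) with h | ⟨c, hc1, hc2, hz⟩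
        · left; intro d hd
          rcases Fin.eq_castSucc_or_eq_last d with ⟨j, rfl⟩ | rfl
          · have := h j (by simpa using hd); simpa using this
          · simp
        · right
          refine ⟨Fin.castSucc c, by simpa using hc1, by simpa using hc2, fun d hd1 hd2 => ?_⟩
          obtain ⟨j, rfl, hj⟩ := aux_lt_castSucc hd2
          have := hz j (by simpa using hd1) hj
          simpa using this
      · rw [Fin.snoc_last] at hc; exact absurd hc (by decide)
    · intro c hc
      rcases Fin.eq_castSucc_or_eq_last c with ⟨i, rfl⟩ | rfl
      · obtain ⟨a, hab, ha⟩ := h3 i (by simpa using hc)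
        exact ⟨Fin.castSucc a, by simpa using hab, by simpa using ha⟩
      · rw [Fin.snoc_last] at hc; exact absurd hc (by decide)

end Snoc

section Snoc2
variable {n : ℕ} (w : Fin n → Fin 3)

lemma snoc_pending_one : PendingW (Fin.snoc w 1) ↔ ValidW w := by
  constructor
  · rintro ⟨_, h2, h3⟩
    constructor
    · intro b hb
      rcases h2 (Fin.castSucc b) (by simpa using hb) with h | ⟨c, hc1, hc2, hz⟩
      · exfalso
        have := h (Fin.last n) (Fin.castSucc_lt_last b)
        rw [Fin.snoc_last] at this; exact absurd this (by decide)
      · have hc' : c ≠ Fin.last n := by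
          intro h; rw [h, Fin.snoc_last] at hc2; exact absurd hc2 (by decide)
        obtain ⟨j, rfl⟩ := Fin.exists_castSucc_eq.2 hc'
        refine ⟨j, by simpa using hc1, by simpa using hc2, fun d hd1 hd2 => ?_⟩
        have := hz (Fin.castSucc d) (by simpa using hd1) (by simpa using hd2)
        simpa using this
    · intro b hb
      obtain ⟨a, hab, ha⟩ := h3 (Fin.castSucc b) (by simpa using hb)
      obtain ⟨j, rfl, hj⟩ := aux_lt_castSucc hab
      exact ⟨j, hj, by simpa using ha⟩
  · rintro ⟨h1, h2⟩
    refine ⟨⟨Fin.last n, by simp, fun c hc => absurd hc (Fin.le_last c).not_gt⟩, ?_, ?_⟩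
    · intro b hb
      rcases Fin.eq_castSucc_or_eq_last b with ⟨i, rfl⟩ | rfl
      · obtain ⟨c, hc1, hc2, hz⟩ := h1 i (by simpa using hb)
        right
        refine ⟨Fin.castSucc c, by simpa using hc1, by simpa using hc2, fun d hd1 hd2 => ?_⟩
        obtain ⟨j, rfl, hj⟩ := aux_lt_castSucc hd2
        have := hz j (by simpa using hd1) hj
        simpa using this
      · left; intro c hc; exact absurd hc (Fin.le_last c).not_gt
    · intro b hb
      rcases Fin.eq_castSucc_or_eq_last b with ⟨i, rfl⟩ | rfl
      · obtain ⟨a, hab, ha⟩ := h2 i (by simpa using hb)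
        exact ⟨Fin.castSucc a, by simpa using hab, by simpa using ha⟩
      · rw [Fin.snoc_last] at hb; exact absurd hb (by decide)

lemma snoc_valid_two :
    ValidW (Fin.snoc w 2) ↔ PendingW w ∨ (ValidW w ∧ ∃ b, w b ≠ 0) := by
  constructor
  · rintro ⟨h1, h2⟩
    by_cases hp : ∃ b, w b = 1 ∧ ∀ c, b < c → w c = 0
    · left
      refine ⟨hp, ?_, ?_⟩
      · intro b hb
        by_cases hz : ∀ c, b < c → w c = 0
        · exact Or.inl hz
        · obtain ⟨c, hc1, hc2, hzz⟩ := h1 (Fin.castSucc b) (by simpa using hb)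
          rcases Fin.eq_castSucc_or_eq_last c with ⟨j, rfl⟩ | rfl
          · right
            refine ⟨j, by simpa using hc1, by simpa using hc2, fun d hd1 hd2 => ?_⟩
            have := hzz (Fin.castSucc d) (by simpa using hd1) (by simpa using hd2)
            simpa using this
          · exfalso
            apply hz
            intro c hc
            have := hzz (Fin.castSucc c) (by simpa using hc) (Fin.castSucc_lt_last c)
            simpa using this
      · intro b hb
        obtain ⟨a, hab, ha⟩ := h2 (Fin.castSucc b) (by simpa using hb)
        obtain ⟨j, rfl, hj⟩ := aux_lt_castSucc hab
        exact ⟨j, hj, by simpa using ha⟩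
    · right
      constructor
      · constructor
        · intro b hb
          obtain ⟨c, hc1, hc2, hzz⟩ := h1 (Fin.castSucc b) (by simpa using hb)
          rcases Fin.eq_castSucc_or_eq_last c with ⟨j, rfl⟩ | rfl
          · refine ⟨j, by simpa using hc1, by simpa using hc2, fun d hd1 hd2 => ?_⟩
            have := hzz (Fin.castSucc d) (by simpa using hd1) (by simpa using hd2)
            simpa using this
          · exfalso
            apply hp
            refine ⟨b, hb, fun c hc => ?_⟩
            have := hzz (Fin.castSucc c) (by simpa using hc) (Fin.castSucc_lt_last c)
            simpa using this
        · intro b hb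
          obtain ⟨a, hab, ha⟩ := h2 (Fin.castSucc b) (by simpa using hb)
          obtain ⟨j, rfl, hj⟩ := aux_lt_castSucc hab
          exact ⟨j, hj, by simpa using ha⟩
      · obtain ⟨a, hab, ha⟩ := h2 (Fin.last n) (by simp)
        obtain ⟨j, rfl⟩ := Fin.exists_castSucc_eq.2 (Fin.ne_last_of_lt hab)
        exact ⟨j, by simpa using ha⟩
  · rintro (⟨⟨b0, hb01, hb02⟩, h2, h3⟩ | ⟨⟨h1, h2⟩, b0, hb0⟩)
    · constructor
      · intro b hb
        have hb' : b ≠ Fin.last n := by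
          intro h; rw [h, Fin.snoc_last] at hb; exact absurd hb (by decide)
        obtain ⟨i, rfl⟩ := Fin.exists_castSucc_eq.2 hb'
        rcases h2 i (by simpa using hb) with h | ⟨c, hc1, hc2, hz⟩
        · refine ⟨Fin.last n, Fin.castSucc_lt_last i, by simp, fun d hd1 hd2 => ?_⟩
          obtain ⟨j, rfl⟩ := Fin.exists_castSucc_eq.2 (Fin.ne_last_of_lt hd2)
          have := h j (by simpa using hd1)
          simpa using this
        · refine ⟨Fin.castSucc c, by simpa using hc1, by simpa using hc2, fun d hd1 hd2 => ?_⟩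
          obtain ⟨j, rfl, hj⟩ := aux_lt_castSucc hd2
          have := hz j (by simpa using hd1) hj
          simpa using this
      · intro b hb
        rcases Fin.eq_castSucc_or_eq_last b with ⟨i, rfl⟩ | rfl
        · obtain ⟨a, hab, ha⟩ := h3 i (by simpa using hb)
          exact ⟨Fin.castSucc a, by simpa using hab, by simpa using ha⟩
        · refine ⟨Fin.castSucc b0, Fin.castSucc_lt_last b0, ?_⟩
          rw [Fin.snoc_castSucc, hb01]; decide
    · constructor
      · intro b hb
        have hb' : b ≠ Fin.last n := by
          intro h; rw [h, Fin.snoc_last] at hb; exact absurd hb (by decide)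
        obtain ⟨i, rfl⟩ := Fin.exists_castSucc_eq.2 hb'
        obtain ⟨c, hc1, hc2, hz⟩ := h1 i (by simpa using hb)
        refine ⟨Fin.castSucc c, by simpa using hc1, by simpa using hc2, fun d hd1 hd2 => ?_⟩
        obtain ⟨j, rfl, hj⟩ := aux_lt_castSucc hd2
        have := hz j (by simpa using hd1) hj
        simpa using this
      · intro b hb
        rcases Fin.eq_castSucc_or_eq_last b with ⟨i, rfl⟩ | rfl
        · obtain ⟨a, hab, ha⟩ := h2 i (by simpa using hb)
          exact ⟨Fin.castSucc a, by simpa using hab, by simpa using ha⟩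
        · exact ⟨Fin.castSucc b0, Fin.castSucc_lt_last b0, by simpa using hb0⟩

end Snoc2

noncomputable def snocEquiv {n : ℕ} (P : (Fin (n+1) → Fin 3) → Prop) :
    {W : Fin (n+1) → Fin 3 // P W} ≃ Σ x : Fin 3, {w : Fin n → Fin 3 // P (Fin.snoc w x)} := by
  refine (Equiv.ofBijective
    (fun p : Σ x : Fin 3, {w : Fin n → Fin 3 // P (Fin.snoc w x)} =>
      (⟨Fin.snoc p.2.1 p.1, p.2.2⟩ : {W : Fin (n+1) → Fin 3 // P W})) ⟨?_, ?_⟩).symm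
  · rintro ⟨x, w, h⟩ ⟨x', w', h'⟩ hh
    have hW : (Fin.snoc w x : Fin (n+1) → Fin 3) = Fin.snoc w' x' := congrArg Subtype.val hh
    have hx : x = x' := by
      simpa using congrFun hW (Fin.last n)
    subst hx
    have hw : w = w' := by
      simpa using congrArg Fin.init hW
    subst hw
    rfl
  · rintro ⟨W, hW⟩
    refine ⟨⟨W (Fin.last n), Fin.init W, ?_⟩, ?_⟩
    · rw [Fin.snoc_init_self]; exact hW
    · exact Subtype.ext (Fin.snoc_init_self W)

noncomputable def A (n : ℕ) : ℕ := Nat.card {w : Fin n → Fin 3 // ValidW w}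
noncomputable def B (n : ℕ) : ℕ := Nat.card {w : Fin n → Fin 3 // PendingW w}

lemma card_subtype_fn {n : ℕ} (P : (Fin n → Fin 3) → Prop) :
    Nat.card {w : Fin n → Fin 3 // P w} = (Finset.univ.filter P).card := by
  rw [Nat.card_eq_fintype_card, Fintype.card_subtype]

lemma A_zero : A 0 = 1 := by
  rw [A, card_subtype_fn]
  rw [Finset.filter_true_of_mem (fun w _ => ?_)]
  · simp
  · have : w = fun _ : Fin 0 => (0:Fin 3) := funext fun b => b.elim0
    rw [this]; exact validW_zero

lemma B_zero : B 0 = 0 := by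
  rw [B, card_subtype_fn]
  rw [Finset.filter_false_of_mem (fun w _ => ?_)]
  · simp
  · rintro ⟨⟨b, _⟩, _⟩; exact b.elim0

lemma A_succ (n : ℕ) : A (n+1) = A n + (B n + (A n - 1)) := by
  have h3 : A n = Nat.card {w : Fin n → Fin 3 // ValidW w ∧ ∃ b, w b ≠ 0} + 1 := by
    have e : {w : Fin n → Fin 3 // ValidW w} ≃
        Option {w : Fin n → Fin 3 // ValidW w ∧ ∃ b, w b ≠ 0} :=
      { toFun := fun p => if h : ∃ b, p.1 b ≠ 0 then some ⟨p.1, p.2, h⟩ else none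
        invFun := fun o => o.elim ⟨fun _ => 0, validW_zero⟩ (fun p => ⟨p.1, p.2.1⟩)
        left_inv := fun p => by
          dsimp only
          by_cases h : ∃ b, p.1 b ≠ 0
          · rw [dif_pos h]
            rfl
          · rw [dif_neg h]
            show (⟨fun _ => 0, validW_zero⟩ : {w : Fin n → Fin 3 // ValidW w}) = p
            exact Subtype.ext (validW_eq_zero h).symm
        right_inv := fun o => by
          match o with
          | none => simp
          | some p =>
            have := p.2.2
            dsimp only [Option.elim]
            rw [dif_pos this] }
    rw [A, Nat.card_congr e, Nat.card_eq_fintype_card, Fintype.card_option,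
      Nat.card_eq_fintype_card]
  have h2 : Nat.card {w : Fin n → Fin 3 // PendingW w ∨ (ValidW w ∧ ∃ b, w b ≠ 0)}
      = B n + (A n - 1) := by
    have hd : Disjoint (fun w : Fin n → Fin 3 => PendingW w)
        (fun w => ValidW w ∧ ∃ b, w b ≠ 0) := by
      intro r h1 h2 w hw
      exact pendingW_not_validW (h1 w hw) (h2 w hw).1
    rw [Nat.card_congr (subtypeOrEquiv _ _ hd), Nat.card_sum]
    have h3' : Nat.card {w : Fin n → Fin 3 // ValidW w ∧ ∃ b, w b ≠ 0} = A n - 1 := by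
      rw [h3, Nat.add_sub_cancel]
    rw [h3']
    rfl
  rw [A, Nat.card_congr (snocEquiv ValidW), Nat.card_eq_fintype_card, Fintype.card_sigma,
    Fin.sum_univ_three]
  rw [← Nat.card_eq_fintype_card, ← Nat.card_eq_fintype_card, ← Nat.card_eq_fintype_card]
  rw [Nat.card_congr (Equiv.subtypeEquivRight (fun w => snoc_valid_zero w)),
    Nat.card_congr (Equiv.subtypeEquivRight (fun w => snoc_valid_two w))]
  have : Nat.card {w : Fin n → Fin 3 // ValidW (Fin.snoc w 1)} = 0 := by
    have : IsEmpty {w : Fin n → Fin 3 // ValidW (Fin.snoc w 1)} :=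
      ⟨fun w => snoc_valid_one w.1 w.2⟩
    simp [Nat.card_eq_fintype_card]
  rw [this, h2]
  simp [A, B]

lemma B_succ (n : ℕ) : B (n+1) = B n + A n := by
  rw [B, Nat.card_congr (snocEquiv PendingW), Nat.card_eq_fintype_card, Fintype.card_sigma,
    Fin.sum_univ_three]
  rw [← Nat.card_eq_fintype_card, ← Nat.card_eq_fintype_card, ← Nat.card_eq_fintype_card]
  rw [Nat.card_congr (Equiv.subtypeEquivRight (fun w => snoc_pending_zero w)),
    Nat.card_congr (Equiv.subtypeEquivRight (fun w => snoc_pending_one w))]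
  have : Nat.card {w : Fin n → Fin 3 // PendingW (Fin.snoc w 2)} = 0 := by
    have : IsEmpty {w : Fin n → Fin 3 // PendingW (Fin.snoc w 2)} :=
      ⟨fun w => snoc_pending_two w.1 w.2⟩
    simp [Nat.card_eq_fintype_card]
  rw [this]
  simp [A, B]

lemma A_ge_one (n : ℕ) : 1 ≤ A n := by
  rw [A, Nat.card_eq_fintype_card]
  exact Fintype.card_pos_iff.2 ⟨⟨fun _ => 0, validW_zero⟩⟩

lemma AB_fib : ∀ n : ℕ, 1 ≤ n → A n = Nat.fib (2*n - 1) ∧ B n = Nat.fib (2*n - 2) + 1 := by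
  intro n hn
  induction n with
  | zero => omega
  | succ m ih =>
    rcases Nat.eq_or_lt_of_le hn with h | h
    · have hm : m = 0 := by omega
      subst hm
      constructor
      · rw [A_succ, A_zero, B_zero]
        norm_num
      · rw [B_succ, A_zero, B_zero]
        norm_num
    · have hm : 1 ≤ m := by omega
      obtain ⟨hA, hB⟩ := ih hm
      have hA1 := A_ge_one m
      constructor
      · rw [A_succ, hA, hB]
        have e1 : 2*(m+1) - 1 = (2*m - 1) + 2 := by omega
        have e2 : 2*m - 1 = (2*m-2) + 1 := by omega
        rw [e1, Nat.fib_add_two, e2, Nat.fib_add_two]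
        have := Nat.fib_pos.2 (show 0 < 2*m-2+1 by omega)
        omega
      · rw [B_succ, hA, hB]
        have e1 : 2*(m+1) - 2 = (2*m - 2) + 2 := by omega
        have e2 : 2*m - 1 = (2*m-2) + 1 := by omega
        rw [e1, Nat.fib_add_two, e2]
        omega

def GoodS {n : ℕ} (s : Setoid (Fin n)) : Prop :=
  ∀ a b c : Fin n, a ≤ b → b ≤ c → (∃ y, y ≠ b ∧ s.r b y) → s.r a c → s.r a b

noncomputable def toWord {n : ℕ} (s : Setoid (Fin n)) : Fin n → Fin 3 := fun b =>
  if ∃ y, y ≠ b ∧ s.r b y then (if ∃ a, a < b ∧ s.r a b then 2 else 1) else 0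

def toSetoid {n : ℕ} (w : Fin n → Fin 3) : Setoid (Fin n) where
  r a b := a = b ∨ (w a ≠ 0 ∧ w b ≠ 0 ∧
    ∀ c : Fin n, min (a:ℕ) (b:ℕ) < (c:ℕ) → (c:ℕ) ≤ max (a:ℕ) (b:ℕ) → w c ≠ 1)
  iseqv := by
    refine ⟨fun a => Or.inl rfl, ?_, ?_⟩
    · rintro a b (rfl | ⟨ha, hb, hz⟩)
      · exact Or.inl rfl
      · refine Or.inr ⟨hb, ha, fun c h1 h2 => hz c ?_ ?_⟩ <;> omega
    · rintro a b c (rfl | ⟨ha, hb, hz⟩) h2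
      · exact h2
      · rcases h2 with rfl | ⟨hb', hc, hz'⟩
        · exact Or.inr ⟨ha, hb, hz⟩
        · refine Or.inr ⟨ha, hc, fun d h1 h2 => ?_⟩
          rcases (show (min (a:ℕ) (b:ℕ) < (d:ℕ) ∧ (d:ℕ) ≤ max (a:ℕ) (b:ℕ)) ∨
              (min (b:ℕ) (c:ℕ) < (d:ℕ) ∧ (d:ℕ) ≤ max (b:ℕ) (c:ℕ)) by omega) with h | h
          · exact hz d h.1 h.2
          · exact hz' d h.1 h.2

section Helpers
variable {n : ℕ}

lemma fin3_cases (x : Fin 3) : x = 0 ∨ x = 1 ∨ x = 2 := by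
  revert x; decide

lemma exists_max_lt (w : Fin n → Fin 3) (b : Fin n) (h : ∃ a, a < b ∧ w a ≠ 0) :
    ∃ a, a < b ∧ w a ≠ 0 ∧ ∀ d, a < d → d < b → w d = 0 := by
  classical
  set T : Finset (Fin n) := Finset.univ.filter (fun a => a < b ∧ w a ≠ 0) with hT
  have hne : T.Nonempty := by
    obtain ⟨a, h1, h2⟩ := h
    exact ⟨a, Finset.mem_filter.2 ⟨Finset.mem_univ _, h1, h2⟩⟩
  obtain ⟨-, hm1, hm2⟩ := Finset.mem_filter.1 (T.max'_mem hne)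
  refine ⟨T.max' hne, hm1, hm2, ?_⟩
  intro d h1 h2
  by_contra hd
  have : d ∈ T := Finset.mem_filter.2 ⟨Finset.mem_univ _, h2, hd⟩
  exact absurd (T.le_max' d this) (not_le.2 h1)

lemma exists_min_gt (w : Fin n → Fin 3) (b : Fin n) (h : ∃ c, b < c ∧ w c ≠ 0) :
    ∃ c, b < c ∧ w c ≠ 0 ∧ (∀ d, b < d → d < c → w d = 0) ∧ ∀ e, b < e → w e ≠ 0 → c ≤ e := by
  classical
  set T : Finset (Fin n) := Finset.univ.filter (fun c => b < c ∧ w c ≠ 0) with hT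
  have hne : T.Nonempty := by
    obtain ⟨c, h1, h2⟩ := h
    exact ⟨c, Finset.mem_filter.2 ⟨Finset.mem_univ _, h1, h2⟩⟩
  obtain ⟨-, hm1, hm2⟩ := Finset.mem_filter.1 (T.min'_mem hne)
  refine ⟨T.min' hne, hm1, hm2, ?_, ?_⟩
  · intro d h1 h2
    by_contra hd
    have : d ∈ T := Finset.mem_filter.2 ⟨Finset.mem_univ _, h1, hd⟩
    exact absurd (T.min'_le d this) (not_le.2 h2)
  · intro e h1 h2
    exact T.min'_le e (Finset.mem_filter.2 ⟨Finset.mem_univ _, h1, h2⟩)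

lemma toWord_eq_zero_iff (s : Setoid (Fin n)) (b : Fin n) :
    toWord s b = 0 ↔ ¬∃ y, y ≠ b ∧ s.r b y := by
  unfold toWord
  split_ifs with h1 h2 <;> simp_all
  
lemma toWord_eq_one_iff (s : Setoid (Fin n)) (b : Fin n) :
    toWord s b = 1 ↔ (∃ y, y ≠ b ∧ s.r b y) ∧ ¬∃ a, a < b ∧ s.r a b := by
  unfold toWord
  split_ifs with h1 h2 <;> simp_all

lemma toWord_eq_two_iff (s : Setoid (Fin n)) (b : Fin n) :
    toWord s b = 2 ↔ (∃ y, y ≠ b ∧ s.r b y) ∧ ∃ a, a < b ∧ s.r a b := by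
  unfold toWord
  split_ifs with h1 h2 <;> simp_all

lemma toWord_ne_zero {s : Setoid (Fin n)} {b : Fin n} (h : ∃ y, y ≠ b ∧ s.r b y) :
    toWord s b ≠ 0 := by
  rw [Ne, toWord_eq_zero_iff]
  exact not_not.2 h

lemma nonsingleton_of_toWord_ne_zero {s : Setoid (Fin n)} {b : Fin n} (h : toWord s b ≠ 0) :
    ∃ y, y ≠ b ∧ s.r b y := by
  by_contra hc
  exact h ((toWord_eq_zero_iff s b).2 hc)

end Helpers

section Main
variable {n : ℕ}

lemma valid_toWord {s : Setoid (Fin n)} (hs : GoodS s) : ValidW (toWord s) := by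
  constructor
  · intro b hb
    rw [toWord_eq_one_iff] at hb
    obtain ⟨⟨y, hy1, hy2⟩, hno⟩ := hb
    have hby : b < y := by
      rcases lt_trichotomy y b with h | h | h
      · exact absurd ⟨y, h, s.iseqv.symm hy2⟩ hno
      · exact absurd h hy1
      · exact h
    have hex : ∃ c, b < c ∧ toWord s c ≠ 0 :=
      ⟨y, hby, toWord_ne_zero ⟨b, fun h => hy1 h.symm, s.iseqv.symm hy2⟩⟩
    obtain ⟨c, hbc, hc0, hzero, hmin⟩ := exists_min_gt _ _ hex
    refine ⟨c, hbc, ?_, hzero⟩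
    rw [toWord_eq_two_iff]
    have hcy : c ≤ y := hmin y hby (toWord_ne_zero ⟨b, fun h => hy1 h.symm, s.iseqv.symm hy2⟩)
    have hbc' : s.r b c := hs b c y hbc.le hcy (nonsingleton_of_toWord_ne_zero hc0) hy2
    exact ⟨nonsingleton_of_toWord_ne_zero hc0, b, hbc, hbc'⟩
  · intro b hb
    rw [toWord_eq_two_iff] at hb
    obtain ⟨-, a, hab, har⟩ := hb
    exact ⟨a, hab, toWord_ne_zero ⟨b, hab.ne', har⟩⟩

lemma goodS_toSetoid (w : Fin n → Fin 3) : GoodS (toSetoid w) := by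
  intro a b c hab hbc hb hac
  obtain ⟨y, hy1, hy2⟩ := hb
  have hwb : w b ≠ 0 := by
    rcases hy2 with h | h
    · exact absurd h.symm hy1
    · exact h.1
  rcases hac with rfl | ⟨hwa, hwc, hz⟩
  · exact Or.inl (le_antisymm hab hbc)
  · rcases eq_or_ne a b with rfl | hne
    · exact Or.inl rfl
    · have h1 : (a:ℕ) ≤ b := hab
      have h2 : (b:ℕ) ≤ c := hbc
      refine Or.inr ⟨hwa, hwb, fun d hd1 hd2 => hz d (by omega) (by omega)⟩

lemma toWord_toSetoid {w : Fin n → Fin 3} (hv : ValidW w) : toWord (toSetoid w) = w := by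
  funext b
  rcases fin3_cases (w b) with hb | hb | hb <;> rw [hb]
  · rw [toWord_eq_zero_iff]
    rintro ⟨y, hy1, (h | h)⟩
    · exact hy1 h.symm
    · exact h.1 hb
  · obtain ⟨c, hbc, hc2, hzero⟩ := hv.1 b hb
    rw [toWord_eq_one_iff]
    constructor
    · refine ⟨c, hbc.ne', Or.inr ⟨by simp [hb], by simp [hc2], fun d h1 h2 => ?_⟩⟩
      have hmin : min (b:ℕ) (c:ℕ) = (b:ℕ) := by
        have : (b:ℕ) < c := hbc
        omega
      have hmax : max (b:ℕ) (c:ℕ) = (c:ℕ) := by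
        have : (b:ℕ) < c := hbc
        omega
      rw [hmin] at h1; rw [hmax] at h2
      rcases eq_or_lt_of_le h2 with he | hlt
      · have : d = c := Fin.ext he
        rw [this, hc2]; decide
      · rw [hzero d (Fin.lt_def.2 h1) (Fin.lt_def.2 hlt)]; decide
    · rintro ⟨a, hab, (h | ⟨hwa, hwb, hz⟩)⟩
      · exact hab.ne h
      · have h1 : (a:ℕ) < b := hab
        exact hz b (by omega) (by omega) hb
  · obtain ⟨a0, ha0b, ha0⟩ := hv.2 b hb
    obtain ⟨a, hab, hwa, hzero⟩ := exists_max_lt w b ⟨a0, ha0b, ha0⟩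
    have hrel : (toSetoid w).r a b := by
      refine Or.inr ⟨hwa, by simp [hb], fun d h1 h2 => ?_⟩
      have h1' : (a:ℕ) < b := hab
      rw [min_eq_left (by omega : (a:ℕ) ≤ b)] at h1
      rw [max_eq_right (by omega : (a:ℕ) ≤ b)] at h2
      rcases eq_or_lt_of_le h2 with he | hlt
      · have : d = b := Fin.ext he
        rw [this, hb]; decide
      · rw [hzero d (Fin.lt_def.2 h1) (Fin.lt_def.2 hlt)]; decide
    rw [toWord_eq_two_iff]
    exact ⟨⟨a, hab.ne, (toSetoid w).iseqv.symm hrel⟩, a, hab, hrel⟩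

lemma s_of_rel {s : Setoid (Fin n)} (hs : GoodS s) :
    ∀ k (a b : Fin n), (b:ℕ) ≤ k → a < b → toWord s a ≠ 0 → toWord s b ≠ 0 →
      (∀ d : Fin n, (a:ℕ) < (d:ℕ) → (d:ℕ) ≤ (b:ℕ) → toWord s d ≠ 1) → s.r a b := by
  intro k
  induction k with
  | zero =>
    intro a b hb hab _ _ _
    have : (a:ℕ) < b := hab
    omega
  | succ m ih =>
    intro a b hbk hab hwa hwb hno1
    have hwb2 : toWord s b = 2 := by
      rcases fin3_cases (toWord s b) with h | h | h
      · exact absurd h hwb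
      · exact absurd h (hno1 b (Fin.lt_def.1 hab) le_rfl)
      · exact h
    rw [toWord_eq_two_iff] at hwb2
    obtain ⟨hbns, a0, ha0b, ha0r⟩ := hwb2
    have ha0w : toWord s a0 ≠ 0 := toWord_ne_zero ⟨b, ha0b.ne', ha0r⟩
    obtain ⟨a', ha'b, hwa', hzero⟩ := exists_max_lt (toWord s) b ⟨a0, ha0b, ha0w⟩
    have ha0a' : a0 ≤ a' := by
      by_contra h
      push_neg at h
      exact absurd (hzero a0 h ha0b) ha0w
    have ha'ns := nonsingleton_of_toWord_ne_zero hwa'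
    have ha0a'r : s.r a0 a' := hs a0 a' b ha0a' ha'b.le ha'ns ha0r
    have ha'br : s.r a' b := s.iseqv.trans (s.iseqv.symm ha0a'r) ha0r
    have haa' : a ≤ a' := by
      by_contra h
      push_neg at h
      exact absurd (hzero a h hab) hwa
    rcases eq_or_lt_of_le haa' with rfl | hlt
    · exact ha'br
    · have hrec : s.r a a' := by
        refine ih a a' ?_ hlt hwa hwa' ?_
        · have h1 : (a':ℕ) < b := ha'b
          omega
        · intro d h1 h2
          refine hno1 d h1 ?_
          have : (a':ℕ) ≤ b := ha'b.le
          omega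
      exact s.iseqv.trans hrec ha'br

lemma toSetoid_toWord {s : Setoid (Fin n)} (hs : GoodS s) : toSetoid (toWord s) = s := by
  have key : ∀ a b : Fin n, a < b → s.r a b → (toSetoid (toWord s)).r a b := by
    intro a b hab hr
    refine Or.inr ⟨toWord_ne_zero ⟨b, hab.ne', hr⟩,
      toWord_ne_zero ⟨a, hab.ne, s.iseqv.symm hr⟩, fun d h1 h2 => ?_⟩
    have hab' : (a:ℕ) < b := hab
    rw [min_eq_left (by omega : (a:ℕ) ≤ b)] at h1
    rw [max_eq_right (by omega : (a:ℕ) ≤ b)] at h2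
    intro hd1
    rw [toWord_eq_one_iff] at hd1
    obtain ⟨hdns, hdno⟩ := hd1
    have had : a < d := by
      rw [Fin.lt_def]; omega
    have hdb : d ≤ b := by
      rw [Fin.le_def]; omega
    exact hdno ⟨a, had, hs a d b had.le hdb hdns hr⟩
  apply Setoid.ext
  intro a b
  constructor
  · rintro (rfl | ⟨hwa, hwb, hz⟩)
    · exact s.iseqv.refl a
    · rcases lt_trichotomy a b with h | h | h
      · refine s_of_rel hs n a b (by omega) h hwa hwb fun d h1 h2 => ?_
        have : (a:ℕ) < b := h
        exact hz d (by omega) (by omega)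
      · exact h ▸ s.iseqv.refl a
      · refine s.iseqv.symm (s_of_rel hs n b a (by omega) h hwb hwa fun d h1 h2 => ?_)
        have : (b:ℕ) < a := h
        exact hz d (by omega) (by omega)
  · intro hr
    rcases lt_trichotomy a b with h | h | h
    · exact key a b h hr
    · exact Or.inl h
    · exact (toSetoid (toWord s)).iseqv.symm (key b a h (s.iseqv.symm hr))

end Main


lemma mem_nonSingletons_iff {n : ℕ} (s : Setoid (Fin n)) (x : Fin n) :
    x ∈ nonSingletons s ↔ ∃ y, y ≠ x ∧ s.r x y := by
  simp [nonSingletons]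

lemma almostInterval_iff_goodS {n : ℕ} (s : Setoid (Fin n)) :
    IsAlmostInterval s ↔ GoodS s := by
  constructor
  · rintro ⟨hnc, hint⟩ a b c hab hbc hb hac
    rcases eq_or_lt_of_le hab with rfl | hab'
    · exact s.iseqv.refl a
    rcases eq_or_lt_of_le hbc with rfl | hbc'
    · exact hac
    have hacne : a ≠ c := (hab'.trans hbc').ne
    have ha : a ∈ nonSingletons s := (mem_nonSingletons_iff s a).2 ⟨c, hacne.symm, hac⟩
    have hbm : b ∈ nonSingletons s := (mem_nonSingletons_iff s b).2 hb
    have hc : c ∈ nonSingletons s :=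
      (mem_nonSingletons_iff s c).2 ⟨a, hacne, s.iseqv.symm hac⟩
    set e := (nonSingletons s).orderIsoOfFin rfl with he
    set i := e.symm ⟨a, ha⟩ with hi
    set j := e.symm ⟨b, hbm⟩ with hj
    set k := e.symm ⟨c, hc⟩ with hk
    have hij : i ≤ j := e.symm.le_iff_le.2 (Subtype.mk_le_mk.2 hab)
    have hjk : j ≤ k := e.symm.le_iff_le.2 (Subtype.mk_le_mk.2 hbc)
    have hik : (RS s).r i k := by
      show s.r (e i).1 (e k).1
      rw [hi, hk, OrderIso.apply_symm_apply, OrderIso.apply_symm_apply]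
      exact hac
    have := hint i j k hij hjk hik
    have h2 : s.r (e i).1 (e j).1 := this
    rw [hi, hj, OrderIso.apply_symm_apply, OrderIso.apply_symm_apply] at h2
    exact h2
  · intro hg
    constructor
    · intro a b c d hab hbc hcd hac hbd
      exact hg a b c hab.le hbc.le ⟨d, (hbc.trans hcd).ne', hbd⟩ hac
    · intro i j k hij hjk hik
      set e := (nonSingletons s).orderIsoOfFin rfl with he
      have hab : (e i).1 ≤ (e j).1 := Subtype.coe_le_coe.2 (e.le_iff_le.2 hij)
      have hbc : (e j).1 ≤ (e k).1 := Subtype.coe_le_coe.2 (e.le_iff_le.2 hjk)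
      have hbm : (e j).1 ∈ nonSingletons s := (e j).2
      exact hg _ _ _ hab hbc ((mem_nonSingletons_iff s _).1 hbm) hik

noncomputable def goodSEquiv {n : ℕ} :
    {s : Setoid (Fin n) // GoodS s} ≃ {w : Fin n → Fin 3 // ValidW w} where
  toFun p := ⟨toWord p.1, valid_toWord p.2⟩
  invFun p := ⟨toSetoid p.1, goodS_toSetoid p.1⟩
  left_inv p := Subtype.ext (toSetoid_toWord p.2)
  right_inv p := Subtype.ext (toWord_toSetoid p.2)

theorem card_almostIntervalPartitions (n : ℕ) (hn : 1 ≤ n) :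
    Nat.card {s : Setoid (Fin n) // IsAlmostInterval s} = Nat.fib (2 * n - 1) := by
  have h1 : Nat.card {s : Setoid (Fin n) // IsAlmostInterval s}
      = Nat.card {s : Setoid (Fin n) // GoodS s} :=
    Nat.card_congr (Equiv.subtypeEquivRight fun s => almostInterval_iff_goodS s)
  have h2 : Nat.card {s : Setoid (Fin n) // GoodS s}
      = Nat.card {w : Fin n → Fin 3 // ValidW w} :=
    Nat.card_congr goodSEquiv
  rw [h1, h2, ← A, (AB_fib n hn).1]
end

section
/- The family of almost-interval partitions is singleton-inductive: for all n ≥ 1 and 1 ≤ r ≤ n+1, inserting a singleton block at position r gives a poset isomorphism from the almost-interval partitions of [n] onto the set of almost-interval partitions of [n+1] containing {r} as a singleton block. -/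
attribute [local instance] Classical.propDecidable

section Aux

variable {n : ℕ}

/-- Pull back a partition of `Fin (n+1)` along `succAbove r`. -/
def restrictS (r : Fin (n + 1)) (σ : Setoid (Fin (n + 1))) : Setoid (Fin n) where
  r i j := σ.r (r.succAbove i) (r.succAbove j)
  iseqv := ⟨fun _ => σ.refl _, fun h => σ.symm h, fun h h' => σ.trans h h'⟩

lemma rel_insert_succAbove (r : Fin (n + 1)) (s : Setoid (Fin n)) (i j : Fin n) :
    (insertSingleton r s).r (r.succAbove i) (r.succAbove j) ↔ s.r i j := by
  constructor
  · rintro (⟨h1, h2⟩ | ⟨i', j', h1, h2, h3⟩)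
    · exact absurd h1 (Fin.succAbove_ne r i)
    · have : i = i' := Fin.succAbove_right_injective h1
      have : j = j' := Fin.succAbove_right_injective h2
      subst this; subst ‹i = i'›; exact h3
  · intro h
    exact Or.inr ⟨i, j, rfl, rfl, h⟩

lemma restrict_insert (r : Fin (n + 1)) (s : Setoid (Fin n)) :
    restrictS r (insertSingleton r s) = s :=
  Setoid.ext fun i j => rel_insert_succAbove r s i j

lemma singleton_insert (r : Fin (n + 1)) (s : Setoid (Fin n)) :
    IsSingletonBlock r (insertSingleton r s) := by
  rintro y (⟨h1, h2⟩ | ⟨i, j, h1, h2, h3⟩)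
  · exact h2
  · exact absurd h1.symm (Fin.succAbove_ne r i)

lemma insert_restrict (r : Fin (n + 1)) (σ : Setoid (Fin (n + 1)))
    (hσ : IsSingletonBlock r σ) : insertSingleton r (restrictS r σ) = σ := by
  apply Setoid.ext
  intro a b
  constructor
  · rintro (⟨rfl, rfl⟩ | ⟨i, j, rfl, rfl, h3⟩)
    · exact σ.refl _
    · exact h3
  · intro h
    rcases eq_or_ne a r with heq | ha
    · exact Or.inl ⟨heq, hσ b (by rwa [heq] at h)⟩
    · obtain ⟨i, rfl⟩ := Fin.exists_succAbove_eq ha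
      rcases eq_or_ne b r with heq | hb
      · exact absurd (hσ _ (σ.symm (by rwa [heq] at h))) (Fin.succAbove_ne r i)
      · obtain ⟨j, rfl⟩ := Fin.exists_succAbove_eq hb
        exact Or.inr ⟨i, j, rfl, rfl, h⟩

lemma noncrossing_insert_iff (r : Fin (n + 1)) (s : Setoid (Fin n)) :
    IsNoncrossing (insertSingleton r s) ↔ IsNoncrossing s := by
  constructor
  · intro H i j k l hij hjk hkl hik hjl
    have h1 := H (r.succAbove i) (r.succAbove j) (r.succAbove k) (r.succAbove l)
      ((Fin.strictMono_succAbove r) hij) ((Fin.strictMono_succAbove r) hjk)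
      ((Fin.strictMono_succAbove r) hkl)
      ((rel_insert_succAbove r s i k).2 hik) ((rel_insert_succAbove r s j l).2 hjl)
    exact (rel_insert_succAbove r s i j).1 h1
  · intro H a b c d hab hbc hcd hac hbd
    rcases hac with ⟨rfl, rfl⟩ | ⟨i, k, rfl, rfl, hik⟩
    · exact absurd (lt_trans hab hbc) (lt_irrefl _)
    · rcases hbd with ⟨rfl, rfl⟩ | ⟨j, l, rfl, rfl, hjl⟩
      · exact absurd (lt_trans hbc hcd) (lt_irrefl _)
      · have hij : i < j := Fin.succAbove_lt_succAbove_iff.1 hab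
        have hjk : j < k := Fin.succAbove_lt_succAbove_iff.1 hbc
        have hkl : k < l := Fin.succAbove_lt_succAbove_iff.1 hcd
        exact (rel_insert_succAbove r s i j).2 (H i j k l hij hjk hkl hik hjl)

lemma nonSingletons_insert (r : Fin (n + 1)) (s : Setoid (Fin n)) :
    nonSingletons (insertSingleton r s) = (nonSingletons s).image r.succAbove := by
  ext x
  simp only [nonSingletons, Finset.mem_filter, Finset.mem_univ, true_and, Finset.mem_image]
  constructor
  · rintro ⟨y, hy, hr⟩
    rcases hr with ⟨rfl, rfl⟩ | ⟨i, j, rfl, rfl, hij⟩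
    · exact absurd rfl hy
    · refine ⟨i, ⟨j, fun hji => hy (by rw [hji]), hij⟩, rfl⟩
  · rintro ⟨i, ⟨j, hji, hij⟩, rfl⟩
    exact ⟨r.succAbove j, fun h => hji (Fin.succAbove_right_injective h),
      Or.inr ⟨i, j, rfl, rfl, hij⟩⟩

lemma card_nonSingletons_insert (r : Fin (n + 1)) (s : Setoid (Fin n)) :
    (nonSingletons (insertSingleton r s)).card = (nonSingletons s).card := by
  rw [nonSingletons_insert, Finset.card_image_of_injective _ (Fin.succAbove_right_injective)]

lemma orderEmb_insert (r : Fin (n + 1)) (s : Setoid (Fin n))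
    (i : Fin (nonSingletons (insertSingleton r s)).card) :
    (nonSingletons (insertSingleton r s)).orderEmbOfFin rfl i =
      r.succAbove ((nonSingletons s).orderEmbOfFin rfl
        (Fin.cast (card_nonSingletons_insert r s) i)) := by
  have key := Finset.orderEmbOfFin_unique
    (s := nonSingletons (insertSingleton r s)) (rfl)
    (f := fun i => r.succAbove ((nonSingletons s).orderEmbOfFin rfl
      (Fin.cast (card_nonSingletons_insert r s) i)))
    (fun x => by
      have hm : r.succAbove ((nonSingletons s).orderEmbOfFin rfl
          (Fin.cast (card_nonSingletons_insert r s) x)) ∈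
          (nonSingletons s).image r.succAbove :=
        Finset.mem_image_of_mem _ (Finset.orderEmbOfFin_mem _ _ _)
      rwa [← nonSingletons_insert] at hm)
    (fun a b hab => (Fin.strictMono_succAbove r)
      (((nonSingletons s).orderEmbOfFin rfl).strictMono (by simpa using hab)))
  exact (congrFun key i).symm

lemma interval_RS_insert_iff (r : Fin (n + 1)) (s : Setoid (Fin n)) :
    IsIntervalSetoid (RS (insertSingleton r s)) ↔ IsIntervalSetoid (RS s) := by
  have hrel : ∀ i j : Fin (nonSingletons (insertSingleton r s)).card,
      (RS (insertSingleton r s)).r i j ↔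
        (RS s).r (Fin.cast (card_nonSingletons_insert r s) i)
          (Fin.cast (card_nonSingletons_insert r s) j) := by
    intro i j
    show (insertSingleton r s).r _ _ ↔ s.r _ _
    rw [Finset.coe_orderIsoOfFin_apply, Finset.coe_orderIsoOfFin_apply,
      orderEmb_insert, orderEmb_insert, rel_insert_succAbove]
    rw [Finset.coe_orderIsoOfFin_apply, Finset.coe_orderIsoOfFin_apply]
  have hcc : ∀ a : Fin (nonSingletons s).card,
      Fin.cast (card_nonSingletons_insert r s)
        (Fin.cast (card_nonSingletons_insert r s).symm a) = a := fun a => Fin.ext rfl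
  constructor
  · intro H a b c hab hbc hac
    have h2 := H (Fin.cast (card_nonSingletons_insert r s).symm a)
      (Fin.cast (card_nonSingletons_insert r s).symm b)
      (Fin.cast (card_nonSingletons_insert r s).symm c)
      (by simp only [Fin.le_def, Fin.coe_cast]; exact hab)
      (by simp only [Fin.le_def, Fin.coe_cast]; exact hbc)
      ((hrel _ _).2 (by rw [hcc, hcc]; exact hac))
    have h3 := (hrel _ _).1 h2
    rwa [hcc, hcc] at h3
  · intro H a b c hab hbc hac
    exact (hrel _ _).2 (H _ _ _ (by simp only [Fin.le_def, Fin.coe_cast]; exact hab)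
      (by simp only [Fin.le_def, Fin.coe_cast]; exact hbc) ((hrel _ _).1 hac))

lemma almostInterval_insert_iff (r : Fin (n + 1)) (s : Setoid (Fin n)) :
    IsAlmostInterval (insertSingleton r s) ↔ IsAlmostInterval s := by
  unfold IsAlmostInterval
  rw [noncrossing_insert_iff, interval_RS_insert_iff]

lemma insert_mono (r : Fin (n + 1)) {s t : Setoid (Fin n)} (h : s ≤ t) :
    insertSingleton r s ≤ insertSingleton r t := by
  rintro a b (⟨h1, h2⟩ | ⟨i, j, h1, h2, h3⟩)
  · exact Or.inl ⟨h1, h2⟩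
  · exact Or.inr ⟨i, j, h1, h2, h h3⟩

end Aux

theorem almostInterval_singletonInductive (n : ℕ) (hn : 1 ≤ n) (r : Fin (n + 1)) :
    ∃ e : {s : Setoid (Fin n) // IsAlmostInterval s} ≃o
        {σ : Setoid (Fin (n + 1)) // IsAlmostInterval σ ∧ IsSingletonBlock r σ},
      ∀ π : {s : Setoid (Fin n) // IsAlmostInterval s},
        (e π).val = insertSingleton r π.val := by
  refine ⟨{
    toFun := fun s => ⟨insertSingleton r s.1,
      (almostInterval_insert_iff r s.1).2 s.2, singleton_insert r s.1⟩
    invFun := fun σ => ⟨restrictS r σ.1, by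
      have h := insert_restrict r σ.1 σ.2.2
      have := σ.2.1
      rw [← h] at this
      exact (almostInterval_insert_iff r _).1 this⟩
    left_inv := fun s => Subtype.ext (restrict_insert r s.1)
    right_inv := fun σ => Subtype.ext (insert_restrict r σ.1 σ.2.2)
    map_rel_iff' := by
      intro s t
      constructor
      · intro h i j hij
        exact (rel_insert_succAbove r t.1 i j).1
          (h ((rel_insert_succAbove r s.1 i j).2 hij))
      · exact fun h => insert_mono r h
  }, fun π => rfl⟩
end

section
/- Let ω be an invertible singleton-inductive weight supported on non-crossing partitions, and let (c^ω_n) be the cumulant functionals defined recursively by the moment–cumulant formula F(a_1⋯a_n) = Σ_{π ∈ NC(n)} ω(π) c^ω_π(a_1,...,a_n) in an operator-valued probability space (A, B, F). Then for all n ≥ 2, c^ω_n(a_1,...,a_n) = 0 whenever some argument a_i lies in B. -/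
attribute [local instance] Classical.propDecidable

section SIHelpers

variable {n : ℕ}

lemma skipEmb_val {m j : ℕ} (h : j + m ≤ n) (i : Fin (n - m)) :
    (skipEmb m j h i : ℕ) = if (i : ℕ) < j then (i : ℕ) else (i : ℕ) + m := rfl

lemma skipEmb_strictMono {m j : ℕ} (h : j + m ≤ n) : StrictMono (skipEmb m j h) := by
  intro a b hab
  have hab' : (a : ℕ) < b := hab
  simp only [Fin.lt_def, skipEmb_val]
  split <;> split <;> omega

lemma skipEmb_injective {m j : ℕ} (h : j + m ≤ n) : Function.Injective (skipEmb m j h) :=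
  (skipEmb_strictMono h).injective

lemma skipEmb_surj {m j : ℕ} (h : j + m ≤ n) (x : Fin n) (hx : (x : ℕ) < j ∨ j + m ≤ (x : ℕ)) :
    ∃ t, skipEmb m j h t = x := by
  have hxn := x.isLt
  by_cases h1 : (x : ℕ) < j
  · refine ⟨⟨(x : ℕ), by omega⟩, Fin.ext ?_⟩
    rw [skipEmb_val, if_pos h1]
  · refine ⟨⟨(x : ℕ) - m, by omega⟩, Fin.ext ?_⟩
    rw [skipEmb_val, if_neg (by show ¬((x:ℕ) - m < j); omega)]
    show (x:ℕ) - m + m = (x:ℕ)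
    omega

lemma comap_noncrossing {N M : ℕ} {f : Fin M → Fin N} (hf : StrictMono f) {s : Setoid (Fin N)}
    (hs : IsNoncrossing s) : IsNoncrossing (Setoid.comap f s) :=
  fun a b c d hab hbc hcd h1 h2 => hs (f a) (f b) (f c) (f d) (hf hab) (hf hbc) (hf hcd) h1 h2

lemma noncrossing_top : IsNoncrossing (⊤ : Setoid (Fin n)) :=
  fun _ _ _ _ _ _ _ _ _ => trivial

lemma eq_top_of_all {s : Setoid (Fin n)} (h : ∀ x y, s.r x y) : s = ⊤ :=
  Setoid.ext fun x y => ⟨fun _ => trivial, fun _ => h x y⟩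

lemma exists_interval_block_sub {s : Setoid (Fin n)} (hnc : IsNoncrossing s)
    (lo hi : ℕ) (b0 : Fin n) (hb0 : ∀ x : Fin n, s.r b0 x → lo ≤ (x : ℕ) ∧ (x : ℕ) ≤ hi) :
    ∃ (j m : ℕ) (hm : 1 ≤ m) (h : j + m ≤ n), lo ≤ j ∧ j + m ≤ hi + 1 ∧
      ∀ x : Fin n, s.r ⟨j, by omega⟩ x ↔ (j ≤ (x : ℕ) ∧ (x : ℕ) < j + m) := by
  classical
  have hne : ∀ b : Fin n, (Finset.univ.filter fun x => s.r b x).Nonempty :=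
    fun b => ⟨b, by simp only [Finset.mem_filter]; exact ⟨Finset.mem_univ b, s.refl b⟩⟩
  set spanF : Fin n → ℕ := fun b =>
    (((Finset.univ.filter fun x => s.r b x).max' (hne b) : Fin n) : ℕ)
      - (((Finset.univ.filter fun x => s.r b x).min' (hne b) : Fin n) : ℕ) with hspan
  set S : Finset (Fin n) :=
    Finset.univ.filter fun b => ∀ x, s.r b x → lo ≤ (x : ℕ) ∧ (x : ℕ) ≤ hi with hS
  have hb0S : b0 ∈ S := by simp only [hS, Finset.mem_filter]; exact ⟨Finset.mem_univ _, hb0⟩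
  obtain ⟨b, hbS, hbmin⟩ := S.exists_min_image spanF ⟨b0, hb0S⟩
  set mn := (Finset.univ.filter fun x => s.r b x).min' (hne b) with hmn
  set mx := (Finset.univ.filter fun x => s.r b x).max' (hne b) with hmx
  have hrmn : s.r b mn := by
    have := (Finset.univ.filter fun x => s.r b x).min'_mem (hne b)
    simpa [← hmn] using this
  have hrmx : s.r b mx := by
    have := (Finset.univ.filter fun x => s.r b x).max'_mem (hne b)
    simpa [← hmx] using this
  have hlow : ∀ x, s.r b x → (mn : ℕ) ≤ (x : ℕ) ∧ (x : ℕ) ≤ (mx : ℕ) := by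
    intro x hx
    constructor
    · exact Finset.min'_le _ x (by simpa using hx)
    · exact Finset.le_max' _ x (by simpa using hx)
  have hbrange := (Finset.mem_filter.mp hbS).2
  have hmnmx : (mn : ℕ) ≤ (mx : ℕ) := (hlow mx hrmx).1
  have key : ∀ x : Fin n, (mn : ℕ) ≤ (x : ℕ) → (x : ℕ) ≤ (mx : ℕ) → s.r b x := by
    intro x h1 h2
    by_contra hx
    have hxmn : (mn : ℕ) < (x : ℕ) := by
      rcases Nat.lt_or_ge (mn : ℕ) (x : ℕ) with h' | h'
      · exact h'
      · exact absurd (show s.r b x by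
          have : x = mn := Fin.ext (by omega)
          rw [this]; exact hrmn) hx
    have hxmx : (x : ℕ) < (mx : ℕ) := by
      rcases Nat.lt_or_ge (x : ℕ) (mx : ℕ) with h' | h'
      · exact h'
      · exact absurd (show s.r b x by
          have : x = mx := Fin.ext (by omega)
          rw [this]; exact hrmx) hx
    have hsub : ∀ y, s.r x y → (mn : ℕ) < (y : ℕ) ∧ (y : ℕ) < (mx : ℕ) := by
      intro y hy
      have hby : ¬ s.r b y := fun h' => hx (s.trans h' (s.symm hy))
      have hymn : ¬ ((y : ℕ) = (mn : ℕ)) := fun he => hby (by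
        have : y = mn := Fin.ext he
        rw [this]; exact hrmn)
      have hymx : ¬ ((y : ℕ) = (mx : ℕ)) := fun he => hby (by
        have : y = mx := Fin.ext he
        rw [this]; exact hrmx)
      rcases Nat.lt_or_ge (y : ℕ) (mn : ℕ) with h' | h'
      · exfalso
        have hcr := hnc y mn x mx (by rw [Fin.lt_def]; omega) (by rw [Fin.lt_def]; omega)
          (by rw [Fin.lt_def]; omega) (s.symm hy) (s.trans (s.symm hrmn) hrmx)
        exact hby (s.trans hrmn (s.symm hcr))
      rcases Nat.lt_or_ge (mx : ℕ) (y : ℕ) with h'' | h''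
      · exfalso
        have hcr := hnc mn x mx y (by rw [Fin.lt_def]; omega) (by rw [Fin.lt_def]; omega)
          (by rw [Fin.lt_def]; omega) (s.trans (s.symm hrmn) hrmx) hy
        exact hx (s.trans hrmn hcr)
      omega
    have hxS : x ∈ S := by
      simp only [hS, Finset.mem_filter]
      refine ⟨Finset.mem_univ _, fun y hy => ?_⟩
      have h3 := hsub y hy
      have h4 := hbrange mn hrmn
      have h5 := hbrange mx hrmx
      omega
    have hspanlt : spanF x < spanF b := by
      have h7 : s.r x ((Finset.univ.filter fun y => s.r x y).min' (hne x)) := by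
        have := (Finset.univ.filter fun y => s.r x y).min'_mem (hne x)
        simpa using this
      have h8 : s.r x ((Finset.univ.filter fun y => s.r x y).max' (hne x)) := by
        have := (Finset.univ.filter fun y => s.r x y).max'_mem (hne x)
        simpa using this
      have h9 := hsub _ h7
      have h10 := hsub _ h8
      simp only [hspan]
      omega
    exact absurd (hbmin x hxS) (by omega)
  have hmxlt := mx.isLt
  refine ⟨(mn : ℕ), (mx : ℕ) - (mn : ℕ) + 1, by omega, by omega, (hbrange mn hrmn).1, ?_, ?_⟩
  · have := (hbrange mx hrmx).2; omega
  · intro x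
    constructor
    · intro h
      have hbx : s.r b x := s.trans hrmn h
      have := hlow x hbx
      omega
    · intro hx
      exact s.trans (s.symm hrmn) (key x (by omega) (by omega))

lemma exists_safe_block {s : Setoid (Fin n)} (hnc : IsNoncrossing s) (hs : s ≠ ⊤)
    (i y : Fin n) (hy : y ≠ i) (hry : s.r i y)
    (hni : ¬ ∃ (j m : ℕ) (hm : 1 ≤ m) (h : j + m ≤ n),
      (∀ x : Fin n, s.r ⟨j, by omega⟩ x ↔ (j ≤ (x : ℕ) ∧ (x : ℕ) < j + m))
        ∧ j ≤ (i : ℕ) ∧ (i : ℕ) < j + m) :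
    ∃ (j m : ℕ) (hm : 1 ≤ m) (h : j + m ≤ n),
      (∀ x : Fin n, s.r ⟨j, by omega⟩ x ↔ (j ≤ (x : ℕ) ∧ (x : ℕ) < j + m)) ∧
      ((i : ℕ) < j ∨ j + m ≤ (i : ℕ)) ∧
      ((j + m < n ∧ j + m ≠ (i : ℕ)) ∨ (1 ≤ j ∧ j - 1 ≠ (i : ℕ))) := by
  have hinlt := i.isLt
  obtain ⟨j, m, hm, hle, -, -, hblock⟩ :=
    exists_interval_block_sub hnc 0 (n - 1) i (fun x _ => ⟨Nat.zero_le _, by have := x.isLt; omega⟩)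
  have hiout : (i : ℕ) < j ∨ j + m ≤ (i : ℕ) := by
    by_contra hc
    push_neg at hc
    exact hni ⟨j, m, hm, hle, hblock, by omega, by omega⟩
  -- membership exclusion: anything related to i is outside the block [j, j+m)
  have hdisj : ∀ (j' m' : ℕ) (hm' : 1 ≤ m') (hle' : j' + m' ≤ n),
      (∀ x : Fin n, s.r ⟨j', by omega⟩ x ↔ (j' ≤ (x : ℕ) ∧ (x : ℕ) < j' + m')) →
      ((i : ℕ) < j' ∨ j' + m' ≤ (i : ℕ)) →
      ∀ x, s.r i x → ¬ (j' ≤ (x : ℕ) ∧ (x : ℕ) < j' + m') := by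
    intro j' m' hm' hle' hblock' hiout' x hx hmem
    have h1 : s.r ⟨j', by omega⟩ x := (hblock' x).mpr hmem
    have h2 : s.r ⟨j', by omega⟩ i := s.trans h1 (s.symm hx)
    have := (hblock' i).mp h2
    omega
  by_cases hsafe : (j + m < n ∧ j + m ≠ (i : ℕ)) ∨ (1 ≤ j ∧ j - 1 ≠ (i : ℕ))
  · exact ⟨j, m, hm, hle, hblock, hiout, hsafe⟩
  push_neg at hsafe
  obtain ⟨hsafe1, hsafe2⟩ := hsafe
  -- hsafe1 : j + m < n → j + m = i ; hsafe2 : 1 ≤ j → j - 1 = i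
  by_cases hj0 : j = 0
  · subst hj0
    by_cases hjm : m = n
    · exfalso
      refine hs (eq_top_of_all fun u v => s.trans (s.symm ((hblock u).mpr ?_)) ((hblock v).mpr ?_))
      · exact ⟨by omega, by have := u.isLt; omega⟩
      · exact ⟨by omega, by have := v.isLt; omega⟩
    · have hmi : m = (i : ℕ) := by
        have := hsafe1 (by omega); omega
      -- block of i lies in [i, n-1]
      have hup : ∀ x, s.r i x → (i : ℕ) ≤ (x : ℕ) ∧ (x : ℕ) ≤ n - 1 := by
        intro x hx
        have := hdisj 0 m hm hle hblock hiout x hx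
        have := x.isLt
        omega
      obtain ⟨j', m', hm', hle', hlo', -, hblock'⟩ :=
        exists_interval_block_sub hnc (i : ℕ) (n - 1) i hup
      have hiout' : (i : ℕ) < j' ∨ j' + m' ≤ (i : ℕ) := by
        by_contra hc
        push_neg at hc
        exact hni ⟨j', m', hm', hle', hblock', by omega, by omega⟩
      have hij' : (i : ℕ) < j' := by omega
      by_cases hC : j' + m' < n
      · exact ⟨j', m', hm', hle', hblock', by omega, Or.inl ⟨hC, by omega⟩⟩
      · refine ⟨j', m', hm', hle', hblock', by omega, Or.inr ⟨by omega, ?_⟩⟩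
        intro he
        -- j' = i + 1 and j' + m' = n : then block of i is {i}, contradiction with y
        have h1 := hup y hry
        have h2 := hdisj j' m' hm' hle' hblock' (by omega) y hry
        have hyv : (y : ℕ) = (i : ℕ) := by have := y.isLt; omega
        exact hy (Fin.ext hyv)
  · -- j ≥ 1, so hsafe2 gives j - 1 = i
    have hj1 : 1 ≤ j := by omega
    have hji : j - 1 = (i : ℕ) := hsafe2 hj1
    have hjmn : j + m = n := by
      by_contra hc
      have := hsafe1 (by omega)
      omega
    have hdown : ∀ x, s.r i x → 0 ≤ (x : ℕ) ∧ (x : ℕ) ≤ (i : ℕ) := by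
      intro x hx
      have := hdisj j m hm hle hblock hiout x hx
      have := x.isLt
      omega
    obtain ⟨j', m', hm', hle', -, hhi', hblock'⟩ :=
      exists_interval_block_sub hnc 0 (i : ℕ) i hdown
    have hiout' : (i : ℕ) < j' ∨ j' + m' ≤ (i : ℕ) := by
      by_contra hc
      push_neg at hc
      exact hni ⟨j', m', hm', hle', hblock', by omega, by omega⟩
    have hjm'i : j' + m' ≤ (i : ℕ) := by omega
    by_cases hC : j' + m' = (i : ℕ)
    · refine ⟨j', m', hm', hle', hblock', by omega, Or.inr ⟨?_, by omega⟩⟩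
      by_contra hc
      -- j' = 0 and j' + m' = i : block of i within [0,i] minus [0,i) = {i}
      have h1 := hdown y hry
      have h2 := hdisj j' m' hm' hle' hblock' (by omega) y hry
      have hyv : (y : ℕ) = (i : ℕ) := by omega
      exact hy (Fin.ext hyv)
    · exact ⟨j', m', hm', hle', hblock', by omega, Or.inl ⟨by omega, by omega⟩⟩

end SIHelpers
section SIHelpers2

variable {k : ℕ}

lemma isSingletonBlock_insertSingleton (r : Fin (k + 1)) (π : Setoid (Fin k)) :
    IsSingletonBlock r (insertSingleton r π) := by
  rintro y (⟨-, rfl⟩ | ⟨i, j, hi, -, -⟩)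
  · rfl
  · exact absurd hi.symm (Fin.succAbove_ne r i)

lemma comap_insertSingleton (r : Fin (k + 1)) (π : Setoid (Fin k)) :
    Setoid.comap r.succAbove (insertSingleton r π) = π := by
  refine Setoid.ext fun i j => ⟨?_, ?_⟩
  · rintro (⟨h1, -⟩ | ⟨i', j', h1, h2, h3⟩)
    · exact absurd h1 (Fin.succAbove_ne r i)
    · have hi : i = i' := Fin.succAbove_right_injective h1
      have hj : j = j' := Fin.succAbove_right_injective h2
      rw [hi, hj]; exact h3
  · intro h
    exact Or.inr ⟨i, j, rfl, rfl, h⟩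

lemma insertSingleton_comap (r : Fin (k + 1)) {s : Setoid (Fin (k + 1))}
    (hs : IsSingletonBlock r s) : insertSingleton r (Setoid.comap r.succAbove s) = s := by
  refine Setoid.ext fun a b => ⟨?_, ?_⟩
  · rintro (⟨ha, hb⟩ | ⟨i, j, ha, hb, h3⟩)
    · rw [ha, hb]
    · rw [ha, hb]; exact h3
  · intro h
    by_cases ha : a = r
    · have hb : b = r := hs b (by rw [← ha]; exact h)
      exact Or.inl ⟨ha, hb⟩
    · have hb : b ≠ r := fun hb => ha (hs a (s.symm (by rw [← hb]; exact h)))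
      obtain ⟨i, hi⟩ := Fin.exists_succAbove_eq ha
      obtain ⟨j, hj⟩ := Fin.exists_succAbove_eq hb
      exact Or.inr ⟨i, j, hi.symm, hj.symm, show s.r _ _ by rw [hi, hj]; exact h⟩

lemma noncrossing_insertSingleton (r : Fin (k + 1)) (π : Setoid (Fin k))
    (hπ : IsNoncrossing π) : IsNoncrossing (insertSingleton r π) := by
  intro a b c d hab hbc hcd hac hbd
  rcases hac with ⟨ha, hc⟩ | ⟨ia, ic, ha, hc, hac'⟩
  · exfalso; rw [ha] at hab; rw [hc] at hbc; exact lt_irrefl _ (hab.trans hbc)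
  · rcases hbd with ⟨hb, hd⟩ | ⟨ib, id', hb, hd, hbd'⟩
    · exfalso; rw [hb] at hbc; rw [hd] at hcd; exact lt_irrefl _ (hbc.trans hcd)
    · subst ha; subst hb; subst hc; subst hd
      refine Or.inr ⟨ia, ib, rfl, rfl, hπ ia ib ic id' ?_ ?_ ?_ hac' hbd'⟩
      · exact (Fin.strictMono_succAbove r).lt_iff_lt.mp hab
      · exact (Fin.strictMono_succAbove r).lt_iff_lt.mp hbc
      · exact (Fin.strictMono_succAbove r).lt_iff_lt.mp hcd

lemma insertSingleton_block (i : Fin (k + 1)) (π : Setoid (Fin k)) (z : Fin (k + 1))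
    (hz : (z : ℕ) = (i : ℕ)) :
    ∀ x, (insertSingleton i π).r z x ↔ ((i : ℕ) ≤ (x : ℕ) ∧ (x : ℕ) < (i : ℕ) + 1) := by
  have hzi : z = i := Fin.ext hz
  subst hzi
  intro x
  constructor
  · intro h
    have hx : x = z := isSingletonBlock_insertSingleton z π x h
    subst hx
    omega
  · intro hx
    have : x = z := Fin.ext (by omega)
    rw [this]

lemma skipEmb_one_succAbove' (i : Fin (k + 1)) (j : ℕ) (hj : j = (i : ℕ))
    (h : j + 1 ≤ k + 1) : skipEmb 1 j h = i.succAbove := by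
  subst hj
  funext t
  apply Fin.ext
  rw [skipEmb_val]
  by_cases hc : (t : ℕ) < (i : ℕ)
  · rw [if_pos hc, Fin.succAbove_of_castSucc_lt i t (by rwa [Fin.lt_def, Fin.coe_castSucc]),
      Fin.coe_castSucc]
  · rw [if_neg hc, Fin.succAbove_of_le_castSucc i t (by rw [Fin.le_def, Fin.coe_castSucc]; omega),
      Fin.val_succ]

lemma prod_merge {M : Type*} [Monoid M] (k j : ℕ) (hj : j < k) (a : Fin (k + 1) → M)
    (a' : Fin k → M)
    (ha' : ∀ t : Fin k, a' t = if (t : ℕ) = j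
      then a ⟨j, by omega⟩ * a ⟨j + 1, by omega⟩ else a (skipEmb 1 j (by omega) t)) :
    (List.ofFn a).prod = (List.ofFn a').prod := by
  have hlen : (List.ofFn a).length = k + 1 := List.length_ofFn
  have hlen' : (List.ofFn a').length = k := List.length_ofFn
  have htake : (List.ofFn a).take j = (List.ofFn a').take j := by
    apply List.ext_getElem
    · rw [List.length_take, List.length_take, hlen, hlen']; omega
    · intro t h1 h2
      rw [List.length_take, hlen] at h1
      have ht : t < j := by omega
      rw [List.getElem_take, List.getElem_take, List.getElem_ofFn, List.getElem_ofFn, ha']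
      rw [if_neg (show ¬ (t = j) by omega)]
      exact congrArg a (Fin.ext (by rw [skipEmb_val, if_pos (show t < j from ht)]))
  have hdropa : (List.ofFn a).drop j = a ⟨j, by omega⟩ :: a ⟨j + 1, by omega⟩
      :: (List.ofFn a).drop (j + 2) := by
    rw [List.drop_eq_getElem_cons (by omega), List.drop_eq_getElem_cons (by omega),
      List.getElem_ofFn, List.getElem_ofFn]
  have hdropa' : (List.ofFn a').drop j
      = (a ⟨j, by omega⟩ * a ⟨j + 1, by omega⟩) :: (List.ofFn a').drop (j + 1) := by
    rw [List.drop_eq_getElem_cons (by omega), List.getElem_ofFn, ha']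
    rw [if_pos (show ((⟨j, by omega⟩ : Fin k) : ℕ) = j from rfl)]
  have htail : (List.ofFn a).drop (j + 2) = (List.ofFn a').drop (j + 1) := by
    apply List.ext_getElem
    · rw [List.length_drop, List.length_drop, hlen, hlen']; omega
    · intro t h1 h2
      rw [List.length_drop, hlen] at h1
      rw [List.getElem_drop, List.getElem_drop, List.getElem_ofFn, List.getElem_ofFn, ha']
      rw [if_neg (show ¬ (j + 1 + t = j) by omega)]
      refine congrArg a (Fin.ext ?_)
      rw [skipEmb_val, if_neg (by show ¬ (j + 1 + t < j); omega)]
      show j + 2 + t = j + 1 + t + 1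
      omega
  rw [← List.prod_take_mul_prod_drop (List.ofFn a) j, ← List.prod_take_mul_prod_drop (List.ofFn a') j,
    htake, hdropa, hdropa', htail]
  simp [mul_assoc]

end SIHelpers2
theorem cumulants_SI_vanish_on_constants
    (K : Type*) [Field K] (A : Type*) [Ring A] [Algebra K A]
    (B : NonUnitalSubalgebra K A) (F : A →ₗ[K] A)
    (hFmem : ∀ a : A, F a ∈ B)
    (hFid : ∀ b ∈ B, F b = b)
    (hFmod : ∀ b ∈ B, ∀ b' ∈ B, ∀ a : A, F (b * a * b') = b * F a * b')
    (ω : (n : ℕ) → Setoid (Fin n) → K)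
    (hω1 : ω 1 ⊥ = 1)
    (hωinv : ∀ n : ℕ, 1 ≤ n → ω n ⊤ ≠ 0)
    (hωSI : ∀ (n : ℕ) (r : Fin (n + 1)) (π : Setoid (Fin n)),
      ω (n + 1) (insertSingleton r π) = ω n π)
    (c : (n : ℕ) → (Fin n → A) → A)
    (cpart : (n : ℕ) → Setoid (Fin n) → (Fin n → A) → A)
    (hc1 : ∀ a : Fin 1 → A, c 1 a = F (a 0))
    (hctop : ∀ (n : ℕ) (a : Fin n → A), cpart n ⊤ a = c n a)
    (hrec : ∀ (n m j : ℕ) (hm : 1 ≤ m) (h : j + m < n) (π : Setoid (Fin n)),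
      (∀ x : Fin n, π.r ⟨j, by omega⟩ x ↔ j ≤ (x : ℕ) ∧ (x : ℕ) < j + m) →
      ∀ a : Fin n → A,
      cpart n π a = cpart (n - m) (Setoid.comap (skipEmb m j (le_of_lt h)) π)
        (fun i => if (i : ℕ) = j
          then c m (fun t => a ⟨j + t, by have := t.isLt; omega⟩) * a ⟨j + m, by omega⟩
          else a (skipEmb m j (le_of_lt h) i)))
    (hrec' : ∀ (n m j : ℕ) (hm : 1 ≤ m) (hj : 1 ≤ j) (h : j + m ≤ n) (π : Setoid (Fin n)),
      (∀ x : Fin n, π.r ⟨j, by omega⟩ x ↔ j ≤ (x : ℕ) ∧ (x : ℕ) < j + m) →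
      ∀ a : Fin n → A,
      cpart n π a = cpart (n - m) (Setoid.comap (skipEmb m j h) π)
        (fun i => if (i : ℕ) = j - 1
          then a ⟨j - 1, by omega⟩ * c m (fun t => a ⟨j + t, by have := t.isLt; omega⟩)
          else a (skipEmb m j h i)))
    (hmc : ∀ (n : ℕ), 1 ≤ n → ∀ a : Fin n → A,
      F (List.ofFn a).prod =
        ∑ π ∈ Finset.univ.filter (fun π : Setoid (Fin n) => IsNoncrossing π),
          ω n π • cpart n π a) :
    ∀ (n : ℕ), 2 ≤ n → ∀ a : Fin n → A, (∃ i, a i ∈ B) → c n a = 0 := by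
  have hK : ∀ (t : K) (x : A), t ≠ 0 → t • x = 0 → x = 0 := by
    intro t x ht h
    have h2 := congrArg (fun y => t⁻¹ • y) h
    simpa [smul_smul, inv_mul_cancel₀ ht] using h2
  suffices H : ∀ n : ℕ,
      (2 ≤ n → ∀ a : Fin n → A, (∃ i, a i ∈ B) → c n a = 0) ∧
      (∀ π : Setoid (Fin n), IsNoncrossing π → ∀ a : Fin n → A,
        (∃ i, a i = 0 ∨ (a i ∈ B ∧ ∃ y, y ≠ i ∧ π.r i y)) → cpart n π a = 0) by
    exact fun n hn a ha => (H n).1 hn a ha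
  intro n
  induction n using Nat.strong_induction_on with
  | _ n IH =>
  -- Step 1: removing an interval block whose cumulant vanishes kills cpart.
  have hremove0 : ∀ (j m : ℕ) (hm : 1 ≤ m) (hle : j + m ≤ n), ¬(j = 0 ∧ j + m = n) →
      ∀ (π : Setoid (Fin n)), IsNoncrossing π →
      (∀ x : Fin n, π.r ⟨j, by omega⟩ x ↔ (j ≤ (x : ℕ) ∧ (x : ℕ) < j + m)) →
      ∀ a : Fin n → A, c m (fun s => a ⟨j + (s : ℕ), by have := s.isLt; omega⟩) = 0 →
      cpart n π a = 0 := by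
    intro j m hm hle hside π hπ hblock a hc0
    rcases Nat.lt_or_ge (j + m) n with hlt | hge
    · rw [hrec n m j hm hlt π hblock a]
      refine (IH (n - m) (by omega)).2 _ (comap_noncrossing (skipEmb_strictMono _) hπ) _
        ⟨⟨j, by omega⟩, Or.inl ?_⟩
      exact (if_pos rfl).trans (mul_eq_zero_of_left hc0 _)
    · have hjm : j + m = n := by omega
      have hj1 : 1 ≤ j := by omega
      rw [hrec' n m j hm hj1 hle π hblock a]
      refine (IH (n - m) (by omega)).2 _ (comap_noncrossing (skipEmb_strictMono _) hπ) _
        ⟨⟨j - 1, by omega⟩, Or.inl ?_⟩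
      exact (if_pos rfl).trans (mul_eq_zero_of_right _ hc0)
  -- Step 2: vanishing for non-total noncrossing partitions with a B-entry in a
  -- non-singleton block.
  have hQne : ∀ (π : Setoid (Fin n)), IsNoncrossing π → π ≠ ⊤ → ∀ a : Fin n → A,
      ∀ i y : Fin n, a i ∈ B → y ≠ i → π.r i y → cpart n π a = 0 := by
    intro π hπ htop a i y haB hyne hry
    have haval : ∀ (p : ℕ) (hp : p < n), p = (i : ℕ) → a ⟨p, hp⟩ ∈ B := by
      intro p hp hpe; subst hpe; exact haB
    by_cases hint : ∃ (j m : ℕ) (hm : 1 ≤ m) (h : j + m ≤ n),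
        (∀ x : Fin n, π.r ⟨j, by omega⟩ x ↔ (j ≤ (x : ℕ) ∧ (x : ℕ) < j + m))
          ∧ j ≤ (i : ℕ) ∧ (i : ℕ) < j + m
    · -- the block of i is an interval block
      obtain ⟨j, m, hm, hle, hblock, hji, hij⟩ := hint
      have hyin : j ≤ (y : ℕ) ∧ (y : ℕ) < j + m :=
        (hblock y).mp (π.trans ((hblock i).mpr ⟨hji, hij⟩) hry)
      have hm2 : 2 ≤ m := by
        by_contra h'
        exact hyne (Fin.ext (by omega))
      have hside : ¬(j = 0 ∧ j + m = n) := by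
        rintro ⟨h1, h2⟩
        refine htop (eq_top_of_all fun u v =>
          π.trans (π.symm ((hblock u).mpr ⟨by omega, by have := u.isLt; omega⟩))
            ((hblock v).mpr ⟨by omega, by have := v.isLt; omega⟩))
      apply hremove0 j m hm hle hside π hπ hblock a
      have hmn : m < n := by omega
      refine (IH m hmn).1 hm2 _ ⟨⟨(i : ℕ) - j, by omega⟩, ?_⟩
      exact haval _ _ (show j + ((i : ℕ) - j) = (i : ℕ) by omega)
    · -- the block of i is not an interval: find a safe interval block elsewhere
      obtain ⟨j, m, hm, hle, hblock, hiout, hsafe⟩ :=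
        exists_safe_block hπ htop i y hyne hry hint
      have hydisj : (y : ℕ) < j ∨ j + m ≤ (y : ℕ) := by
        by_contra hcon
        push_neg at hcon
        have h1 : π.r ⟨j, by omega⟩ y := (hblock y).mpr (by omega)
        have h2 : π.r ⟨j, by omega⟩ i := π.trans h1 (π.symm hry)
        have := (hblock i).mp h2
        omega
      rcases hsafe with ⟨hlt, hne'⟩ | ⟨hj1, hne'⟩
      · rw [hrec n m j hm hlt π hblock a]
        obtain ⟨ti, hti⟩ := skipEmb_surj (le_of_lt hlt) i hiout
        obtain ⟨ty, hty⟩ := skipEmb_surj (le_of_lt hlt) y hydisj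
        refine (IH (n - m) (by omega)).2 _ (comap_noncrossing (skipEmb_strictMono _) hπ) _
          ⟨ti, Or.inr ⟨?_, ty, ?_, ?_⟩⟩
        · have htij : ¬ ((ti : ℕ) = j) := by
            intro he
            have hieq : (i : ℕ) = j + m := by
              rw [← hti, skipEmb_val, if_neg (by omega)]; omega
            exact hne' hieq.symm
          show (if (ti : ℕ) = j then _ else _) ∈ B
          rw [if_neg htij, hti]
          exact haB
        · exact fun he => hyne (by rw [← hty, ← hti, he])
        · show π.r (skipEmb m j (le_of_lt hlt) ti) (skipEmb m j (le_of_lt hlt) ty)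
          rw [hti, hty]; exact hry
      · rw [hrec' n m j hm hj1 hle π hblock a]
        obtain ⟨ti, hti⟩ := skipEmb_surj hle i hiout
        obtain ⟨ty, hty⟩ := skipEmb_surj hle y hydisj
        refine (IH (n - m) (by omega)).2 _ (comap_noncrossing (skipEmb_strictMono _) hπ) _
          ⟨ti, Or.inr ⟨?_, ty, ?_, ?_⟩⟩
        · have htij : ¬ ((ti : ℕ) = j - 1) := by
            intro he
            have hieq : (i : ℕ) = j - 1 := by
              rw [← hti, skipEmb_val, if_pos (by omega)]; omega
            exact hne' hieq.symm
          show (if (ti : ℕ) = j - 1 then _ else _) ∈ B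
          rw [if_neg htij, hti]
          exact haB
        · exact fun he => hyne (by rw [← hty, ← hti, he])
        · show π.r (skipEmb m j hle ti) (skipEmb m j hle ty)
          rw [hti, hty]; exact hry
  -- Step 3: the statement for c itself (P n)
  have hP : 2 ≤ n → ∀ a : Fin n → A, (∃ i, a i ∈ B) → c n a = 0 := by
    intro hn a ha
    obtain ⟨i, haB⟩ := ha
    obtain ⟨k, rfl⟩ : ∃ k, n = k + 1 := ⟨n - 1, by omega⟩
    have hk : 1 ≤ k := by omega
    have hFval : ∀ (p : ℕ) (hp : p < k + 1), p = (i : ℕ) → F (a ⟨p, hp⟩) = a i := by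
      intro p hp hpe; subst hpe; exact hFid _ haB
    -- the key summation argument
    have hkey : ∀ a' : Fin k → A,
        (List.ofFn a).prod = (List.ofFn a').prod →
        (∀ π' : Setoid (Fin k), IsNoncrossing π' →
          cpart (k + 1) (insertSingleton i π') a = cpart k π' a') →
        c (k + 1) a = 0 := by
      intro a' hprod hcp
      have h1 := hmc (k + 1) (by omega) a
      have h2 := hmc k (by omega) a'
      have hsplit := Finset.sum_filter_add_sum_filter_not
        (Finset.univ.filter (fun π : Setoid (Fin (k + 1)) => IsNoncrossing π))
        (fun π => IsSingletonBlock i π)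
        (fun π => ω (k + 1) π • cpart (k + 1) π a)
      have hmain := h1.trans hsplit.symm
      have hS1 : ∑ π ∈ (Finset.univ.filter
            (fun π : Setoid (Fin (k + 1)) => IsNoncrossing π)).filter
            (fun π => IsSingletonBlock i π), ω (k + 1) π • cpart (k + 1) π a
          = ∑ π' ∈ Finset.univ.filter (fun π' : Setoid (Fin k) => IsNoncrossing π'),
            ω k π' • cpart k π' a' := by
        refine Finset.sum_nbij' (fun π => Setoid.comap i.succAbove π)
          (fun π' => insertSingleton i π') ?_ ?_ ?_ ?_ ?_
        · intro π hπm
          simp only [Finset.mem_filter] at hπm ⊢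
          exact ⟨Finset.mem_univ _,
            comap_noncrossing (Fin.strictMono_succAbove i) hπm.1.2⟩
        · intro π' hπ'
          simp only [Finset.mem_filter] at hπ' ⊢
          exact ⟨⟨Finset.mem_univ _, noncrossing_insertSingleton i π' hπ'.2⟩,
            isSingletonBlock_insertSingleton i π'⟩
        · intro π hπm
          simp only [Finset.mem_filter] at hπm
          exact insertSingleton_comap i hπm.2
        · intro π' _
          exact comap_insertSingleton i π'
        · intro π hπm
          simp only [Finset.mem_filter] at hπm
          conv_lhs => rw [← insertSingleton_comap i hπm.2]
          rw [hωSI k i (Setoid.comap i.succAbove π),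
            hcp _ (comap_noncrossing (Fin.strictMono_succAbove i) hπm.1.2)]
      have hS2 : ∑ π ∈ (Finset.univ.filter
            (fun π : Setoid (Fin (k + 1)) => IsNoncrossing π)).filter
            (fun π => ¬ IsSingletonBlock i π), ω (k + 1) π • cpart (k + 1) π a
          = ω (k + 1) ⊤ • c (k + 1) a := by
        have hy : ∃ y : Fin (k + 1), y ≠ i := by
          by_cases h' : (i : ℕ) = 0
          · exact ⟨⟨1, by omega⟩, fun he => by
              have := congrArg Fin.val he; simp at this; omega⟩
          · exact ⟨⟨0, by omega⟩, fun he => by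
              have := congrArg Fin.val he; simp at this; omega⟩
        obtain ⟨y, hyi⟩ := hy
        rw [Finset.sum_eq_single_of_mem ⊤ ?_ ?_]
        · rw [hctop]
        · simp only [Finset.mem_filter]
          exact ⟨⟨Finset.mem_univ _, noncrossing_top⟩, fun hsing => hyi (hsing y trivial)⟩
        · intro π hπm hπtop
          simp only [Finset.mem_filter] at hπm
          obtain ⟨⟨-, hNC⟩, hnsing⟩ := hπm
          obtain ⟨z, hz⟩ := not_forall.mp hnsing
          rw [Classical.not_imp] at hz
          rw [hQne π hNC hπtop a i z haB hz.2 hz.1, smul_zero]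
      rw [hS1, ← h2, ← hprod, hS2] at hmain
      exact hK _ _ (hωinv (k + 1) (by omega)) (left_eq_add.mp hmain)
    rcases Nat.lt_or_ge (i : ℕ) k with hik | hik
    · -- i is not the last index: merge to the right
      refine hkey (fun t => if (t : ℕ) = (i : ℕ)
        then a i * a ⟨(i : ℕ) + 1, by omega⟩ else a (i.succAbove t)) ?_ ?_
      · refine prod_merge k (i : ℕ) hik a _ (fun t => ?_)
        by_cases ht : (t : ℕ) = (i : ℕ)
        · rw [if_pos ht, if_pos ht]
        · rw [if_neg ht, if_neg ht, skipEmb_one_succAbove' i (i : ℕ) rfl]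
      · intro π' hπ'
        have hblockR : ∀ x : Fin (k + 1),
            (insertSingleton i π').r ⟨(i : ℕ), by omega⟩ x ↔
              ((i : ℕ) ≤ (x : ℕ) ∧ (x : ℕ) < (i : ℕ) + 1) :=
          fun x => insertSingleton_block i π' _ rfl x
        have hrecR : cpart (k + 1) (insertSingleton i π') a
            = cpart k (Setoid.comap i.succAbove (insertSingleton i π'))
              (fun t : Fin k => if (t : ℕ) = (i : ℕ)
                then c 1 (fun s : Fin 1 => a ⟨(i : ℕ) + (s : ℕ), by omega⟩)
                  * a ⟨(i : ℕ) + 1, by omega⟩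
                else a (i.succAbove t)) := by
          have h0 := hrec (k + 1) 1 (i : ℕ) le_rfl (by omega) (insertSingleton i π') hblockR a
          rw [skipEmb_one_succAbove' i (i : ℕ) rfl] at h0
          exact h0
        rw [hrecR, comap_insertSingleton i π']
        congr 1
        funext t
        by_cases ht : (t : ℕ) = (i : ℕ)
        · rw [if_pos ht, if_pos ht, hc1]
          congr 1
          exact hFval _ _ (show (i : ℕ) + ((0 : Fin 1) : ℕ) = (i : ℕ) by
            show (i : ℕ) + 0 = (i : ℕ); omega)
        · rw [if_neg ht, if_neg ht]
    · -- i is the last index: merge to the left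
      have hikk : (i : ℕ) = k := by have := i.isLt; omega
      refine hkey (fun t => if (t : ℕ) = k - 1
        then a ⟨k - 1, by omega⟩ * a i else a (i.succAbove t)) ?_ ?_
      · refine prod_merge k (k - 1) (by omega) a _ (fun t => ?_)
        by_cases ht : (t : ℕ) = k - 1
        · rw [if_pos ht, if_pos ht]
          have : a i = a ⟨k - 1 + 1, by omega⟩ :=
            congrArg a (Fin.ext (by show (i : ℕ) = k - 1 + 1; omega))
          rw [this]
        · rw [if_neg ht, if_neg ht]
          refine congrArg a (Fin.ext ?_)
          have htlt : (t : ℕ) < k - 1 := by have := t.isLt; omega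
          rw [Fin.succAbove_of_castSucc_lt i t
            (by rw [Fin.lt_def, Fin.coe_castSucc]; omega), Fin.coe_castSucc,
            skipEmb_val, if_pos htlt]
      · intro π' hπ'
        have hblockL : ∀ x : Fin (k + 1),
            (insertSingleton i π').r ⟨k, by omega⟩ x ↔
              (k ≤ (x : ℕ) ∧ (x : ℕ) < k + 1) := by
          intro x
          have := insertSingleton_block i π' ⟨k, by omega⟩ (by exact hikk.symm) x
          rw [hikk] at this
          exact this
        have hrecL : cpart (k + 1) (insertSingleton i π') a
            = cpart k (Setoid.comap i.succAbove (insertSingleton i π'))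
              (fun t : Fin k => if (t : ℕ) = k - 1
                then a ⟨k - 1, by omega⟩ * c 1 (fun s : Fin 1 => a ⟨k + (s : ℕ), by omega⟩)
                else a (i.succAbove t)) := by
          have h0 := hrec' (k + 1) 1 k le_rfl hk le_rfl (insertSingleton i π') hblockL a
          rw [skipEmb_one_succAbove' i k hikk.symm] at h0
          exact h0
        rw [hrecL, comap_insertSingleton i π']
        congr 1
        funext t
        by_cases ht : (t : ℕ) = k - 1
        · rw [if_pos ht, if_pos ht, hc1]
          congr 1
          exact hFval _ _ (show k + ((0 : Fin 1) : ℕ) = (i : ℕ) by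
            show k + 0 = (i : ℕ); omega)
        · rw [if_neg ht, if_neg ht]
  -- Step 4: the statement for cpart (G n)
  have hG : ∀ π : Setoid (Fin n), IsNoncrossing π → ∀ a : Fin n → A,
      (∃ i, a i = 0 ∨ (a i ∈ B ∧ ∃ y, y ≠ i ∧ π.r i y)) → cpart n π a = 0 := by
    intro π hπ a hex
    obtain ⟨i, hi⟩ := hex
    by_cases htop : π = ⊤
    · subst htop
      rw [hctop]
      rcases hi with h0 | ⟨hB, y, hyne, -⟩
      · rcases Nat.lt_or_ge n 2 with h2 | h2
        · have hn1 : n = 1 := by have := i.isLt; omega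
          subst hn1
          rw [hc1]
          rw [show (0 : Fin 1) = i from Subsingleton.elim _ _, h0, map_zero]
        · refine hP h2 a ⟨i, ?_⟩
          rw [h0]; exact B.zero_mem
      · have h2 : 2 ≤ n := by
          by_contra h'
          push_neg at h'
          have h3 := y.isLt
          have h4 := i.isLt
          exact hyne (Fin.ext (by omega))
        exact hP h2 a ⟨i, hB⟩
    · rcases hi with h0 | ⟨hB, y, hyne, hry⟩
      · -- a i = 0 : pick any interval block and remove it
        have hzval : ∀ (p : ℕ) (hp : p < n), p = (i : ℕ) → a ⟨p, hp⟩ = 0 := by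
          intro p hp hpe; subst hpe; exact h0
        obtain ⟨j, m, hm, hle, -, -, hblock⟩ :=
          exists_interval_block_sub hπ 0 (n - 1) i (fun x _ => ⟨Nat.zero_le _, by
            have := x.isLt; omega⟩)
        have hside : ¬(j = 0 ∧ j + m = n) := by
          rintro ⟨h1, h2⟩
          refine htop (eq_top_of_all fun u v =>
            π.trans (π.symm ((hblock u).mpr ⟨by omega, by have := u.isLt; omega⟩))
              ((hblock v).mpr ⟨by omega, by have := v.isLt; omega⟩))
        by_cases hin : j ≤ (i : ℕ) ∧ (i : ℕ) < j + m
        · apply hremove0 j m hm hle hside π hπ hblock a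
          rcases Nat.lt_or_ge m 2 with hm1 | hm2
          · have hm1' : m = 1 := by omega
            subst hm1'
            rw [hc1]
            have h00 : F (a ⟨j + ((0 : Fin 1) : ℕ), by omega⟩) = F 0 := by
              rw [hzval _ _ (show j + ((0 : Fin 1) : ℕ) = (i : ℕ) by
                show j + 0 = (i : ℕ); omega)]
            exact h00.trans (map_zero F)
          · refine (IH m (by omega)).1 hm2 _ ⟨⟨(i : ℕ) - j, by omega⟩, ?_⟩
            show a ⟨j + ((i : ℕ) - j), by omega⟩ ∈ B
            rw [hzval (j + ((i : ℕ) - j)) (by omega) (by omega)]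
            exact B.zero_mem
        · -- i is outside the removed block
          rcases Nat.lt_or_ge (j + m) n with hlt | hge
          · rw [hrec n m j hm hlt π hblock a]
            obtain ⟨ti, hti⟩ := skipEmb_surj (le_of_lt hlt) i (by omega)
            refine (IH (n - m) (by omega)).2 _
              (comap_noncrossing (skipEmb_strictMono _) hπ) _ ⟨ti, Or.inl ?_⟩
            by_cases hcnd : (ti : ℕ) = j
            · have hieq : (i : ℕ) = j + m := by
                rw [← hti, skipEmb_val, if_neg (by omega)]; omega
              exact (if_pos hcnd).trans
                (mul_eq_zero_of_right _ (hzval _ _ (by omega)))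
            · exact (if_neg hcnd).trans (by rw [hti]; exact h0)
          · have hjm : j + m = n := by omega
            have hj1 : 1 ≤ j := by omega
            rw [hrec' n m j hm hj1 hle π hblock a]
            obtain ⟨ti, hti⟩ := skipEmb_surj hle i (by omega)
            refine (IH (n - m) (by omega)).2 _
              (comap_noncrossing (skipEmb_strictMono _) hπ) _ ⟨ti, Or.inl ?_⟩
            by_cases hcnd : (ti : ℕ) = j - 1
            · have hieq : (i : ℕ) = j - 1 := by
                rw [← hti, skipEmb_val, if_pos (by omega)]; omega
              exact (if_pos hcnd).trans
                (mul_eq_zero_of_left (hzval _ _ (by omega)) _)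
            · exact (if_neg hcnd).trans (by rw [hti]; exact h0)
      · exact hQne π hπ htop a i y hB hyne hry
  exact ⟨hP, hG⟩
end
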